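/- arXiv:math/0401133 — 4 statements merged into one kernel-verified Lean document; each statement's English description precedes it below -/
import Mathlib

section
/- Let G be a finitely generated group with subgroups H and K, let X be a nontrivial H-almost invariant subset of G and let Y be a nontrivial K-almost invariant subset of G. Then X ∩ Y is H-finite if and only if X ∩ Y is K-finite. Consequently, crossing is symmetric: Y crosses X if and only if X crosses Y. -/
open Pointwise

universe u v

section Defs

variable {G : Type v} [Group G]

/-- `W` is `H`-finite: `W` is contained in the union of finitely many left cosets of `H`. -/
def HFin (H : Subgroup G) (W : Set G) : Prop :=
  ∃ F : Finset G, W ⊆ (H : Set G) * (F : Set G)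

/-- `X` is an `H`-almost invariant subset of `G`: `HX = X` and for every `a : G`
the symmetric difference of `X` and `Xa` is `H`-finite. -/
def AlmostInv (H : Subgroup G) (X : Set G) : Prop :=
  (∀ h ∈ H, h • X = X) ∧
    ∀ a : G, HFin H ((X \ (· * a) '' X) ∪ ((· * a) '' X \ X))

/-- `X` is a nontrivial `H`-almost invariant subset of `G`. -/
def NontrivAI (H : Subgroup G) (X : Set G) : Prop :=
  AlmostInv H X ∧ ¬ HFin H X ∧ ¬ HFin H Xᶜ

/-- `X ~ Y` : the symmetric difference of `X` and `Y` is `H`-finite. -/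
def AIEquiv (H : Subgroup G) (X Y : Set G) : Prop :=
  HFin H ((X \ Y) ∪ (Y \ X))

/-- `H` and `K` are commensurable: `H ⊓ K` has finite index in both `H` and `K`. -/
def CommSub (H K : Subgroup G) : Prop :=
  ((H ⊓ K).subgroupOf H).index ≠ 0 ∧ ((H ⊓ K).subgroupOf K).index ≠ 0

/-- `E(X₁,…,Xₙ)`: the set of all translates of the `Xᵢ` and of their complements. -/
def ESet {ι : Type*} (X : ι → Set G) : Set (Set G) :=
  {A | ∃ (i : ι) (g : G), A = g • X i ∨ A = (g • X i)ᶜ}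

/-- `W` is small with respect to `U ∈ E`: `W` is `gHᵢg⁻¹`-finite, where `U = gXᵢ` or
`U = (gXᵢ)ᶜ` (so that `U` is almost invariant over `gHᵢg⁻¹`). -/
def SmallFor {ι : Type*} (H : ι → Subgroup G) (X : ι → Set G) (U W : Set G) : Prop :=
  ∃ (i : ι) (g : G), (U = g • X i ∨ U = (g • X i)ᶜ) ∧ HFin (H i) (g⁻¹ • W)

/-- Condition (*) (good position): if two of the four corners of a pair of elements
of `E` are small, then one of the four corners is empty. -/
def GoodPos {ι : Type*} (H : ι → Subgroup G) (X : ι → Set G) : Prop :=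
  ∀ U ∈ ESet X, ∀ V ∈ ESet X, ∀ p q : Fin 4, p ≠ q →
    SmallFor H X U (![U ∩ V, U ∩ Vᶜ, Uᶜ ∩ V, Uᶜ ∩ Vᶜ] p) →
    SmallFor H X U (![U ∩ V, U ∩ Vᶜ, Uᶜ ∩ V, Uᶜ ∩ Vᶜ] q) →
    U ∩ V = ∅ ∨ U ∩ Vᶜ = ∅ ∨ Uᶜ ∩ V = ∅ ∨ Uᶜ ∩ Vᶜ = ∅

/-- Almost inclusion: `U ≤ V` iff `U ∩ Vᶜ` is empty or is the only small corner
among the four corners of `(U, V)`. -/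
def LeE {ι : Type*} (H : ι → Subgroup G) (X : ι → Set G) (U V : Set G) : Prop :=
  U ∩ Vᶜ = ∅ ∨
    (SmallFor H X U (U ∩ Vᶜ) ∧ ¬ SmallFor H X U (U ∩ V) ∧
      ¬ SmallFor H X U (Uᶜ ∩ V) ∧ ¬ SmallFor H X U (Uᶜ ∩ Vᶜ))

/-- `E(Y)` for a single almost invariant set. -/
def ESet1 (Y : Set G) : Set (Set G) := ESet (fun _ : Unit => Y)

def SmallFor1 (K : Subgroup G) (Y : Set G) (U W : Set G) : Prop :=
  SmallFor (fun _ : Unit => K) (fun _ : Unit => Y) U W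

def GoodPos1 (K : Subgroup G) (Y : Set G) : Prop :=
  GoodPos (fun _ : Unit => K) (fun _ : Unit => Y)

def LeE1 (K : Subgroup G) (Y : Set G) (U V : Set G) : Prop :=
  LeE (fun _ : Unit => K) (fun _ : Unit => Y) U V

/-- `Y` is invertible: some `g ∈ G` satisfies `gY = Y*`. -/
def InvertibleSet (Y : Set G) : Prop := ∃ g : G, g • Y = Yᶜ

/-- There is a `G`-equivariant bijection `E(Y₁) → E(Y₂)` preserving complementation,
the partial order of almost inclusion, and equivalence classes. -/
def GoodBij (K₁ : Subgroup G) (Y₁ : Set G) (K₂ : Subgroup G) (Y₂ : Set G) : Prop :=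
  ∃ φ : Set G → Set G,
    Set.BijOn φ (ESet1 Y₁) (ESet1 Y₂) ∧
    (∀ (g : G), ∀ U ∈ ESet1 Y₁, φ (g • U) = g • φ U) ∧
    (∀ U ∈ ESet1 Y₁, ∀ V ∈ ESet1 Y₁, LeE1 K₁ Y₁ U V → LeE1 K₂ Y₂ (φ U) (φ V)) ∧
    (∀ U ∈ ESet1 Y₁, φ Uᶜ = (φ U)ᶜ) ∧
    (∀ U ∈ ESet1 Y₁, SmallFor1 K₁ Y₁ U ((U \ φ U) ∪ (φ U \ U)))

/-- `x` lies in the ball of radius `R` about `g` in the word metric determined by `S`. -/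
def InBall (S : Finset G) (R : ℕ) (g x : G) : Prop :=
  ∃ l : List G, (∀ s ∈ l, s ∈ S ∨ s⁻¹ ∈ S) ∧ l.length ≤ R ∧ x = g * l.prod

/-- Some edge of the Cayley graph of `(G,S)` with one endpoint in `A` and the other in
`Aᶜ` has an endpoint in the ball `N_R(g)`. -/
def BNear (S : Finset G) (R : ℕ) (g : G) (A : Set G) : Prop :=
  ∃ x s : G, (s ∈ S ∨ s⁻¹ ∈ S) ∧
    ((x ∈ A ∧ x * s ∉ A) ∨ (x ∉ A ∧ x * s ∈ A)) ∧
    (InBall S R g x ∨ InBall S R g (x * s))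

/-- `E_R* = E − E_R`: the elements of `E` no edge of whose coboundary meets `N_R(g)`. -/
def ERstar (S : Finset G) (R : ℕ) (g : G) {ι : Type*} (X : ι → Set G) : Set (Set G) :=
  {A | A ∈ ESet X ∧ ¬ BNear S R g A}

/-- `U_g = {A ∈ E_R* : g ∈ A}`. -/
def UgSet (S : Finset G) (R : ℕ) (g : G) {ι : Type*} (X : ι → Set G) : Set (Set G) :=
  {A | A ∈ ERstar S R g X ∧ g ∈ A}

/-- `U₁ = U_g ∪ {B ∈ E_R : ∃ A ∈ U_g, A ≤ B}`. -/
def U1Set {ι : Type*} (H : ι → Subgroup G) (S : Finset G) (R : ℕ) (g : G) (X : ι → Set G) :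
    Set (Set G) :=
  UgSet S R g X ∪
    {B | (B ∈ ESet X ∧ BNear S R g B) ∧ ∃ A ∈ UgSet S R g X, LeE H X A B}

/-- `V₁ = E − (U₁ ∪ U₁*)`. -/
def V1Set {ι : Type*} (H : ι → Subgroup G) (S : Finset G) (R : ℕ) (g : G) (X : ι → Set G) :
    Set (Set G) :=
  ESet X \ (U1Set H S R g X ∪ (fun B : Set G => Bᶜ) '' U1Set H S R g X)

/-- `U₂ = U₁ ∪ {A₁} ∪ {B ∈ V₁ : A₁ ≤ B}`. -/
def U2Set {ι : Type*} (H : ι → Subgroup G) (S : Finset G) (R : ℕ) (g : G) (X : ι → Set G)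
    (A₁ : Set G) : Set (Set G) :=
  U1Set H S R g X ∪ {A₁} ∪ {B | B ∈ V1Set H S R g X ∧ LeE H X A₁ B}

/-- `G` is (canonically isomorphic to) the amalgamated free product `A *_C B` of its
subgroups `A` and `B` over `C`, expressed via the universal property of the pushout. -/
def IsAmalgam (C A B : Subgroup G) : Prop :=
  C ≤ A ∧ C ≤ B ∧
    ∀ (P : Type u) [Group P] (f : ↥A →* P) (g : ↥B →* P),
      (∀ (c : G) (hcA : c ∈ A) (hcB : c ∈ B), c ∈ C → f ⟨c, hcA⟩ = g ⟨c, hcB⟩) →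
      ∃! h : G →* P, (∀ (a : G) (ha : a ∈ A), h a = f ⟨a, ha⟩) ∧
        (∀ (b : G) (hb : b ∈ B), h b = g ⟨b, hb⟩)

/-- `G` is (canonically isomorphic to) an HNN extension with associated subgroup `C`:
there are a base subgroup `K`, associated subgroups `C, D ≤ K`, an isomorphism
`φ : C ≃ D` and a stable letter `t` conjugating `C` to `D` via `φ`, such that `G` has
the universal property of the HNN extension. -/
def IsHNNOver (C : Subgroup G) : Prop :=
  ∃ (K D : Subgroup G) (t : G) (φ : ↥C ≃* ↥D),
    C ≤ K ∧ D ≤ K ∧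
    (∀ c : ↥C, t⁻¹ * (c : G) * t = ((φ c : ↥D) : G)) ∧
    ∀ (P : Type u) [Group P] (f : ↥K →* P) (p : P),
      (∀ (c : ↥C) (hc : (c : G) ∈ K) (hc' : ((φ c : ↥D) : G) ∈ K),
        p⁻¹ * f ⟨(c : G), hc⟩ * p = f ⟨((φ c : ↥D) : G), hc'⟩) →
      ∃! h : G →* P, (∀ (k : G) (hk : k ∈ K), h k = f ⟨k, hk⟩) ∧ h t = p

/-- `G` splits over `C`: `G` is an amalgamated free product `A *_C B` in which `C` is a
proper subgroup of both `A` and `B`, or an HNN extension with associated subgroup `C`. -/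
def SplitsOver (C : Subgroup G) : Prop :=
  (∃ A B : Subgroup G, C ≠ A ∧ C ≠ B ∧ IsAmalgam.{u} C A B) ∨ IsHNNOver.{u} C

end Defs

section Aux

variable {G : Type*} [Group G]

lemma aux_mem_HF {H : Subgroup G} {F : Finset G} {h₁ x₀ : G} (hh : h₁ ∈ H)
    (hm : h₁ * x₀ ∈ (H : Set G) * (F : Set G)) : x₀ ∈ (H : Set G) * (F : Set G) := by
  obtain ⟨k, hk, e, he, hke⟩ := hm
  refine ⟨h₁⁻¹ * k, H.mul_mem (H.inv_mem hh) hk, e, he, ?_⟩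
  show h₁⁻¹ * k * e = x₀
  have hke' : k * e = h₁ * x₀ := hke
  rw [mul_assoc, hke']
  group

/-- The key lemma (Scott): if `X` is nontrivial `H`-almost invariant and `Y` is
`K`-almost invariant, and `X ∩ Y` is `H`-finite, then it is `K`-finite. -/
lemma aux_key {H K : Subgroup G} {X Y : Set G}
    (hX : NontrivAI H X) (hY : AlmostInv K Y) (hfin : HFin H (X ∩ Y)) :
    HFin K (X ∩ Y) := by
  classical
  obtain ⟨F, hF⟩ := hfin
  -- a point of X not covered by HF
  have hnsub : ¬ X ⊆ (H : Set G) * (F : Set G) := fun hsub => hX.2.1 ⟨F, hsub⟩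
  obtain ⟨x₀, hx₀X, hx₀⟩ := Set.not_subset.mp hnsub
  -- for each f ∈ F, the K-finiteness witness for a = (f⁻¹ * x₀)⁻¹
  have hEy : ∀ a : G, ∃ E : Finset G,
      ((Y \ (· * a) '' Y) ∪ ((· * a) '' Y \ Y)) ⊆ (K : Set G) * (E : Set G) := hY.2
  choose Ey hEy using hEy
  refine ⟨F.biUnion (fun f => Ey (f⁻¹ * x₀)⁻¹), ?_⟩
  rintro g ⟨hgX, hgY⟩
  obtain ⟨h₁, hh₁, f, hf, hhf⟩ := hF ⟨hgX, hgY⟩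
  -- h₁ * x₀ ∈ X
  have hx₁X : h₁ * x₀ ∈ X := by
    have := hX.1.1 h₁ hh₁
    rw [← this]
    exact Set.smul_mem_smul_set hx₀X
  -- h₁ * x₀ ∉ Y
  have hx₁Y : h₁ * x₀ ∉ Y := by
    intro hy
    exact hx₀ (aux_mem_HF hh₁ (hF ⟨hx₁X, hy⟩))
  set a : G := (f⁻¹ * x₀)⁻¹ with ha
  -- g * (f⁻¹ * x₀) = h₁ * x₀
  have hga : g * (f⁻¹ * x₀) = h₁ * x₀ := by
    rw [← hhf]; group
  -- g ∈ Y \ (Y · a)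
  have hgmem : g ∈ (Y \ (· * a) '' Y) ∪ ((· * a) '' Y \ Y) := by
    left
    refine ⟨hgY, ?_⟩
    rintro ⟨y, hyY, hya⟩
    apply hx₁Y
    have hya' : y * a = g := hya
    have hy : y = h₁ * x₀ := by
      rw [← hga, ← hya', ha]
      group
    rwa [hy] at hyY
  obtain ⟨k, hk, e, he, hke⟩ := hEy a hgmem
  refine ⟨k, hk, e, ?_, hke⟩
  rw [Finset.coe_biUnion]
  exact Set.mem_biUnion hf he

lemma aux_smul_compl (h : G) (X : Set G) : h • Xᶜ = (h • X)ᶜ := by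
  ext x
  simp [Set.mem_smul_set_iff_inv_smul_mem]

lemma aux_image_compl (a : G) (X : Set G) : (· * a) '' Xᶜ = ((· * a) '' X)ᶜ := by
  ext x
  constructor
  · rintro ⟨y, hy, rfl⟩ ⟨z, hz, hza⟩
    exact hy (by rw [mul_left_inj] at hza; exact hza ▸ hz)
  · intro hx
    exact ⟨x * a⁻¹, fun hmem => hx ⟨x * a⁻¹, hmem, by group⟩, by group⟩

lemma aux_nontriv_compl {H : Subgroup G} {X : Set G} (hX : NontrivAI H X) :
    NontrivAI H Xᶜ := by
  obtain ⟨⟨hinv, hai⟩, hnf, hnfc⟩ := hX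
  refine ⟨⟨?_, ?_⟩, hnfc, by simpa using hnf⟩
  · intro h hh
    rw [aux_smul_compl, hinv h hh]
  · intro a
    have h2 := hai a
    have heq : (Xᶜ \ (· * a) '' Xᶜ) ∪ ((· * a) '' Xᶜ \ Xᶜ)
        = (X \ (· * a) '' X) ∪ ((· * a) '' X \ X) := by
      rw [aux_image_compl]
      ext x
      by_cases hx : x ∈ X <;> by_cases hy : x ∈ (· * a) '' X <;> simp [hx, hy]
    rw [heq]
    exact h2

end Aux
/-- If `X` is a nontrivial `H`-almost invariant subset of `G` and `Y` is a nontrivial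
`K`-almost invariant subset of `G`, then `X ∩ Y` is `H`-finite iff it is `K`-finite;
consequently `Y` crosses `X` iff `X` crosses `Y`. -/
theorem smallness_symmetric_and_crossing_symmetric
    {G : Type*} [Group G] (hG : Group.FG G) (H K : Subgroup G) (X Y : Set G)
    (hX : NontrivAI H X) (hY : NontrivAI K Y) :
    (HFin H (X ∩ Y) ↔ HFin K (X ∩ Y)) ∧
    ((¬ HFin H (X ∩ Y) ∧ ¬ HFin H (Xᶜ ∩ Y) ∧ ¬ HFin H (X ∩ Yᶜ) ∧ ¬ HFin H (Xᶜ ∩ Yᶜ)) ↔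
      (¬ HFin K (X ∩ Y) ∧ ¬ HFin K (X ∩ Yᶜ) ∧ ¬ HFin K (Xᶜ ∩ Y) ∧ ¬ HFin K (Xᶜ ∩ Yᶜ))) := by
  have c : ∀ (H' K' : Subgroup G) (X' Y' : Set G), NontrivAI H' X' → NontrivAI K' Y' →
      (HFin H' (X' ∩ Y') ↔ HFin K' (X' ∩ Y')) := by
    intro H' K' X' Y' hX' hY'
    constructor
    · exact fun h => aux_key hX' hY'.1 h
    · intro h
      have := aux_key hY' hX'.1 (by rwa [Set.inter_comm] at h)
      rwa [Set.inter_comm] at this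
  have c1 := c H K X Y hX hY
  have c2 := c H K Xᶜ Y (aux_nontriv_compl hX) hY
  have c3 := c H K X Yᶜ hX (aux_nontriv_compl hY)
  have c4 := c H K Xᶜ Yᶜ (aux_nontriv_compl hX) (aux_nontriv_compl hY)
  exact ⟨c1, by tauto⟩
end

section
/- Let G be a finitely generated group, let X be a nontrivial H-almost invariant subset of G and let Y be a nontrivial K-almost invariant subset of G. If the symmetric difference of X and Y is H-finite, then H and K are commensurable subgroups of G (H ∩ K has finite index in both H and K), and the symmetric difference of X and Y is also K-finite. -/
open Pointwise

universe u v

section Helpers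
variable {G : Type*} [Group G]

lemma hfin_mono' {L : Subgroup G} {W₁ W₂ : Set G} (h : W₁ ⊆ W₂) (hW : HFin L W₂) : HFin L W₁ := by
  obtain ⟨F, hF⟩ := hW; exact ⟨F, h.trans hF⟩

lemma hfin_empty' (L : Subgroup G) : HFin L (∅ : Set G) := ⟨∅, by simp⟩

lemma hfin_union' {L : Subgroup G} {W₁ W₂ : Set G} (h₁ : HFin L W₁) (h₂ : HFin L W₂) :
    HFin L (W₁ ∪ W₂) := by
  classical
  obtain ⟨F₁, hF₁⟩ := h₁; obtain ⟨F₂, hF₂⟩ := h₂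
  refine ⟨F₁ ∪ F₂, ?_⟩
  rw [Finset.coe_union, Set.mul_union]
  exact Set.union_subset (hF₁.trans Set.subset_union_left) (hF₂.trans Set.subset_union_right)

lemma hfin_image' {L : Subgroup G} (c : G) {W : Set G} (hW : HFin L W) :
    HFin L ((· * c) '' W) := by
  classical
  obtain ⟨F, hF⟩ := hW
  refine ⟨F.image (· * c), ?_⟩
  rintro x ⟨w, hw, rfl⟩
  obtain ⟨l, hl, f, hf, rfl⟩ := Set.mem_mul.mp (hF hw)
  exact Set.mem_mul.mpr ⟨l, hl, f * c,
    Finset.mem_coe.mpr (Finset.mem_image_of_mem _ (Finset.mem_coe.mp hf)), (mul_assoc _ _ _).symm⟩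

/-- transfer of HFin along a covering of `K` by `L`-cosets -/
lemma hfin_trans' {L K : Subgroup G} {T : Finset G} (hKT : (K : Set G) ⊆ (L : Set G) * T)
    {W : Set G} (hW : HFin K W) : HFin L W := by
  classical
  obtain ⟨F, hF⟩ := hW
  refine ⟨T * F, fun x hx => ?_⟩
  obtain ⟨k, hk, f, hf, rfl⟩ := Set.mem_mul.mp (hF hx)
  obtain ⟨l, hl, t, ht, rfl⟩ := Set.mem_mul.mp (hKT hk)
  rw [Finset.coe_mul]
  exact Set.mem_mul.mpr ⟨l, hl, t * f,
    Set.mul_mem_mul ht hf, (mul_assoc _ _ _).symm⟩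

/-- from a covering of `K` by `H`-cosets, extract a covering by `(H ⊓ K)`-cosets -/
lemma cover_inf' {H K : Subgroup G} {A : Finset G}
    (h : (K : Set G) ⊆ (H : Set G) * A) :
    ∃ T : Finset G, (K : Set G) ⊆ ((H ⊓ K : Subgroup G) : Set G) * T := by
  classical
  have pick : ∀ a : G, ∃ k₀ : G, (∃ k, k ∈ K ∧ ∃ h' ∈ (H : Set G), h' * a = k) →
      (k₀ ∈ K ∧ ∃ h' ∈ (H : Set G), h' * a = k₀) := by
    intro a
    by_cases hex : ∃ k, k ∈ K ∧ ∃ h' ∈ (H : Set G), h' * a = k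
    · obtain ⟨k, hk⟩ := hex; exact ⟨k, fun _ => hk⟩
    · exact ⟨1, fun hx => absurd hx hex⟩
  choose f hf using pick
  refine ⟨A.image f, fun k hk => ?_⟩
  obtain ⟨h', hh', a, ha, hka⟩ := Set.mem_mul.mp (h hk)
  have hex : ∃ k', k' ∈ K ∧ ∃ h'' ∈ (H : Set G), h'' * a = k' :=
    ⟨k, SetLike.mem_coe.mp hk, h', hh', hka⟩
  obtain ⟨hfK, h₀, hh₀, hfa⟩ := hf a hex
  refine Set.mem_mul.mpr ⟨k * (f a)⁻¹, ?_, f a,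
    Finset.mem_coe.mpr (Finset.mem_image_of_mem _ (Finset.mem_coe.mp ha)), by group⟩
  have h1 : k * (f a)⁻¹ ∈ H := by
    have e1 : k = h' * a := hka.symm
    have e2 : k * (f a)⁻¹ = h' * h₀⁻¹ := by rw [e1, ← hfa]; group
    rw [e2]; exact mul_mem hh' (inv_mem hh₀)
  have h2 : k * (f a)⁻¹ ∈ K := mul_mem (SetLike.mem_coe.mp hk) (inv_mem hfK)
  exact SetLike.mem_coe.mpr (Subgroup.mem_inf.mpr ⟨h1, h2⟩)

lemma index_ne_zero_of_cover' {M J : Subgroup G} {T : Finset G}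
    (hT : (M : Set G) ⊆ (J : Set G) * T) : (J.subgroupOf M).index ≠ 0 := by
  classical
  have pick : ∀ m : ↥M, ∃ t : G, t ∈ T ∧ ∃ j ∈ J, j * t = ((m : G))⁻¹ := by
    intro m
    have hm : ((m : G))⁻¹ ∈ (M : Set G) := SetLike.mem_coe.mpr (inv_mem m.2)
    obtain ⟨j, hj, t, ht, hjt⟩ := Set.mem_mul.mp (hT hm)
    exact ⟨t, Finset.mem_coe.mp ht, j, SetLike.mem_coe.mp hj, hjt⟩
  choose t ht j hj hjt using pick
  have inj : ∀ m m' : ↥M, t m = t m' → ((m : G))⁻¹ * (m' : G) ∈ J := by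
    intro m m' hmm
    have h2 : ((m' : G)) = (t m')⁻¹ * (j m')⁻¹ := by
      have := hjt m'
      have : ((m' : G))⁻¹ = j m' * t m' := this.symm
      calc ((m' : G)) = (((m' : G))⁻¹)⁻¹ := by group
        _ = (j m' * t m')⁻¹ := by rw [← this]
        _ = (t m')⁻¹ * (j m')⁻¹ := by group
    have h1 : ((m : G))⁻¹ = j m * t m := (hjt m).symm
    rw [h1, h2, hmm]
    have e : j m * t m' * ((t m')⁻¹ * (j m')⁻¹) = j m * (j m')⁻¹ := by group
    rw [e]
    exact mul_mem (hj m) (inv_mem (hj m'))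
  haveI : Finite (↥M ⧸ J.subgroupOf M) := by
    apply Finite.of_injective (fun q : (↥M ⧸ J.subgroupOf M) => (⟨t q.out, ht q.out⟩ : {x // x ∈ T}))
    intro q q' hqq'
    have heq : t q.out = t q'.out := congrArg Subtype.val hqq'
    have hmem : (q.out)⁻¹ * q'.out ∈ J.subgroupOf M := by
      rw [Subgroup.mem_subgroupOf]
      push_cast
      exact inj q.out q'.out heq
    calc q = QuotientGroup.mk q.out := (QuotientGroup.out_eq' q).symm
      _ = QuotientGroup.mk q'.out := QuotientGroup.eq.mpr hmem
      _ = q' := QuotientGroup.out_eq' q'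
  exact Subgroup.index_ne_zero_of_finite

end Helpers

/-- If the symmetric difference of a nontrivial `H`-almost invariant set `X` and a
nontrivial `K`-almost invariant set `Y` is `H`-finite, then `H` and `K` are commensurable
and the symmetric difference is also `K`-finite. -/
theorem equivalent_implies_commensurable
    {G : Type*} [Group G] (hG : Group.FG G) (H K : Subgroup G) (X Y : Set G)
    (hX : NontrivAI H X) (hY : NontrivAI K Y)
    (h : HFin H ((X \ Y) ∪ (Y \ X))) :
    CommSub H K ∧ HFin K ((X \ Y) ∪ (Y \ X)) := by
  classical
  obtain ⟨⟨hXinv, hXai⟩, hXnf, hXcnf⟩ := hX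
  obtain ⟨⟨hYinv, hYai⟩, hYnf, hYcnf⟩ := hY
  set D : Set G := (X \ Y) ∪ (Y \ X) with hDdef
  -- membership transfer for invariance
  have hYk : ∀ k ∈ K, ∀ v : G, k * v ∈ Y ↔ v ∈ Y := by
    intro k hk v
    conv_lhs => rw [← hYinv k hk, ← smul_eq_mul (a := k)]
    exact Set.smul_mem_smul_set_iff
  have hXh : ∀ a ∈ H, ∀ v : G, a * v ∈ X ↔ v ∈ X := by
    intro a ha v
    conv_lhs => rw [← hXinv a ha, ← smul_eq_mul (a := a)]
    exact Set.smul_mem_smul_set_iff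
  -- exit sets are H-finite
  have exitY_H : ∀ c : G, HFin H {v | v ∈ Y ∧ v * c ∉ Y} := by
    intro c
    have hsub : {v | v ∈ Y ∧ v * c ∉ Y} ⊆
        ((X \ (· * c⁻¹) '' X) ∪ ((· * c⁻¹) '' X \ X)) ∪ (D ∪ (· * c⁻¹) '' D) := by
      rintro v ⟨hvY, hvcY⟩
      by_cases hvD : v ∈ D
      · exact Or.inr (Or.inl hvD)
      by_cases hvcD : v * c ∈ D
      · exact Or.inr (Or.inr ⟨v * c, hvcD, by group⟩)
      · have hvX : v ∈ X := by
          by_contra hvX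
          exact hvD (Or.inr ⟨hvY, hvX⟩)
        have hvcX : v * c ∉ X := by
          intro hvcX
          exact hvcD (Or.inl ⟨hvcX, hvcY⟩)
        refine Or.inl (Or.inl ⟨hvX, ?_⟩)
        rintro ⟨x, hx, hxv⟩
        apply hvcX
        have hxe : x = v * c := by rw [← hxv]; group
        rwa [hxe] at hx
    exact hfin_mono' hsub (hfin_union' (hXai c⁻¹) (hfin_union' h (hfin_image' c⁻¹ h)))
  -- nonemptiness
  have hYne : Y.Nonempty := by
    rw [Set.nonempty_iff_ne_empty]
    intro he; exact hYnf (he ▸ hfin_empty' K)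
  have hYcne : Yᶜ.Nonempty := by
    rw [Set.nonempty_iff_ne_empty]
    intro he; exact hYcnf (he ▸ hfin_empty' K)
  obtain ⟨y₀, hy₀⟩ := hYne
  obtain ⟨y₁, hy₁⟩ := hYcne
  -- Step 1 : K is H-finite
  obtain ⟨A₁, hA₁⟩ := exitY_H (y₀⁻¹ * y₁)
  have hKcover : (K : Set G) ⊆ (H : Set G) * (A₁.image (· * y₀⁻¹) : Finset G) := by
    intro k hk
    have hk' : k ∈ K := SetLike.mem_coe.mp hk
    have hmem : k * y₀ ∈ {v | v ∈ Y ∧ v * (y₀⁻¹ * y₁) ∉ Y} := by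
      refine ⟨(hYk k hk' y₀).mpr hy₀, ?_⟩
      have e : k * y₀ * (y₀⁻¹ * y₁) = k * y₁ := by group
      rw [e, hYk k hk' y₁]
      exact hy₁
    obtain ⟨a, ha, f, hf, haf⟩ := Set.mem_mul.mp (hA₁ hmem)
    refine Set.mem_mul.mpr ⟨a, ha, f * y₀⁻¹,
      Finset.mem_coe.mpr (Finset.mem_image_of_mem _ (Finset.mem_coe.mp hf)), ?_⟩
    rw [← mul_assoc, haf]; group
  -- Step 2 : pass to L = H ⊓ K
  obtain ⟨T, hT⟩ := cover_inf' hKcover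
  have hKtoL : ∀ W : Set G, HFin K W → HFin (H ⊓ K) W := fun W => hfin_trans' hT
  -- exit sets of Y are (H ⊓ K)-finite
  have exitY_L : ∀ c : G, HFin (H ⊓ K) {v | v ∈ Y ∧ v * c ∉ Y} := by
    intro c
    refine hKtoL _ (hfin_mono' ?_ (hYai c⁻¹))
    rintro v ⟨hvY, hvcY⟩
    refine Or.inl ⟨hvY, ?_⟩
    rintro ⟨x, hx, hxv⟩
    apply hvcY
    have hxe : x = v * c := by rw [← hxv]; group
    rwa [hxe] at hx
  -- Step 3 : H is (H ⊓ K)-finite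
  obtain ⟨F, hF⟩ := h
  have hgex : ∃ g, g ∈ X ∧ g ∉ (H : Set G) * (F : Set G) := by
    by_contra hcon
    push_neg at hcon
    exact hXnf ⟨F, fun x hx => hcon x hx⟩
  have hgex' : ∃ g', g' ∉ X ∧ g' ∉ (H : Set G) * (F : Set G) := by
    by_contra hcon
    push_neg at hcon
    exact hXcnf ⟨F, fun x hx => hcon x hx⟩
  obtain ⟨g, hgX, hgF⟩ := hgex
  obtain ⟨g', hg'X, hg'F⟩ := hgex'
  have hHnot : ∀ a ∈ H, ∀ x : G, x ∉ (H : Set G) * (F : Set G) →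
      a * x ∉ (H : Set G) * (F : Set G) := by
    intro a ha x hx hmem
    obtain ⟨b, hb, f, hf, hbf⟩ := Set.mem_mul.mp hmem
    refine hx (Set.mem_mul.mpr ⟨a⁻¹ * b, ?_, f, hf, ?_⟩)
    · exact SetLike.mem_coe.mpr (mul_mem (inv_mem ha) (SetLike.mem_coe.mp hb))
    · rw [mul_assoc, hbf]; group
  have hHgY : ∀ a ∈ H, a * g ∈ Y := by
    intro a ha
    have h1 : a * g ∈ X := (hXh a ha g).mpr hgX
    by_contra hnY
    have hD : a * g ∈ D := Or.inl ⟨h1, hnY⟩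
    exact hHnot a ha g hgF (hF hD)
  have hHg'Y : ∀ a ∈ H, a * g' ∉ Y := by
    intro a ha hY'
    have h1 : a * g' ∉ X := fun hc => hg'X ((hXh a ha g').mp hc)
    have hD : a * g' ∈ D := Or.inr ⟨hY', h1⟩
    exact hHnot a ha g' hg'F (hF hD)
  obtain ⟨A₂, hA₂⟩ := exitY_L (g⁻¹ * g')
  have hHcover : (H : Set G) ⊆ ((H ⊓ K : Subgroup G) : Set G) *
      (A₂.image (· * g⁻¹) : Finset G) := by
    intro a ha
    have ha' : a ∈ H := SetLike.mem_coe.mp ha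
    have hmem : a * g ∈ {v | v ∈ Y ∧ v * (g⁻¹ * g') ∉ Y} := by
      refine ⟨hHgY a ha', ?_⟩
      have e : a * g * (g⁻¹ * g') = a * g' := by group
      rw [e]
      exact hHg'Y a ha'
    obtain ⟨l, hl, f, hf, hlf⟩ := Set.mem_mul.mp (hA₂ hmem)
    refine Set.mem_mul.mpr ⟨l, hl, f * g⁻¹,
      Finset.mem_coe.mpr (Finset.mem_image_of_mem _ (Finset.mem_coe.mp hf)), ?_⟩
    rw [← mul_assoc, hlf]; group
  -- conclusions
  refine ⟨⟨index_ne_zero_of_cover' hHcover, index_ne_zero_of_cover' hT⟩, ?_⟩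
  refine ⟨(A₂.image (· * g⁻¹)) * F, fun x hx => ?_⟩
  obtain ⟨b, hb, f, hf, rfl⟩ := Set.mem_mul.mp (hF hx)
  obtain ⟨l, hl, u, hu, rfl⟩ := Set.mem_mul.mp (hHcover hb)
  have hlK : l ∈ (K : Set G) :=
    SetLike.mem_coe.mpr ((Subgroup.mem_inf.mp (SetLike.mem_coe.mp hl)).2)
  rw [Finset.coe_mul]
  exact Set.mem_mul.mpr ⟨l, hlK, u * f, Set.mul_mem_mul hu hf, (mul_assoc _ _ _).symm⟩
end

section
/- Let G be a finitely generated group with finitely generated subgroups H and K, let A be a nontrivial H-almost invariant subset of G and let U be a nontrivial K-almost invariant subset of G. Fix a finite generating set of G and let d be the associated word metric. Then there exists D > 0 such that for every g ∈ G, if gU ≤ A (that is, gU ∩ A* is empty or is the only small corner among the four corners of (gU, A)), then gU is contained in the D-neighbourhood N_D(A) = {x ∈ G : d(x, A) ≤ D} of A. -/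
open Pointwise

universe u v

set_option linter.unusedSectionVars false
set_option linter.unnecessarySimpa false
set_option maxHeartbeats 1000000

namespace ScottProof

variable {G : Type*} [Group G]

/-- generator or inverse of generator -/
def Sgen (S : Finset G) (s : G) : Prop := s ∈ S ∨ s⁻¹ ∈ S

def Word (S : Finset G) (l : List G) : Prop := ∀ s ∈ l, Sgen S s

lemma exists_word (S : Finset G) (hS : Subgroup.closure (S : Set G) = ⊤) (x : G) :
    ∃ l : List G, Word S l ∧ l.prod = x := by
  have hx : x ∈ Submonoid.closure ((S : Set G) ∪ (S : Set G)⁻¹) := by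
    rw [← Subgroup.closure_toSubmonoid, hS]; trivial
  obtain ⟨l, hl, hp⟩ := Submonoid.exists_list_of_mem_closure hx
  refine ⟨l, fun s hs => ?_, hp⟩
  rcases hl s hs with h | h
  · exact Or.inl h
  · exact Or.inr (by simpa using h)

/-- word length -/
noncomputable def wlen (S : Finset G) (x : G) : ℕ :=
  sInf {n | ∃ l : List G, Word S l ∧ l.length = n ∧ l.prod = x}

section wlen
variable (S : Finset G) (hS : Subgroup.closure (S : Set G) = ⊤)
include hS

lemma wlen_spec (x : G) :
    ∃ l : List G, Word S l ∧ l.length = wlen S x ∧ l.prod = x := by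
  have hne : {n | ∃ l : List G, Word S l ∧ l.length = n ∧ l.prod = x}.Nonempty := by
    obtain ⟨l, hl, hp⟩ := exists_word S hS x
    exact ⟨l.length, l, hl, rfl, hp⟩
  exact Nat.sInf_mem hne

lemma wlen_le {x : G} {l : List G} (hl : Word S l) (hp : l.prod = x) :
    wlen S x ≤ l.length :=
  Nat.sInf_le ⟨l, hl, rfl, hp⟩

@[simp] lemma wlen_one : wlen S (1 : G) = 0 :=
  Nat.le_zero.mp (wlen_le S hS (l := []) (fun s hs => by simp at hs) rfl)

lemma wlen_mul (x y : G) : wlen S (x * y) ≤ wlen S x + wlen S y := by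
  obtain ⟨l, hl, hll, hlp⟩ := wlen_spec S hS x
  obtain ⟨m, hm, hml, hmp⟩ := wlen_spec S hS y
  have : wlen S (x * y) ≤ (l ++ m).length := by
    refine wlen_le S hS (fun s hs => ?_) (by simp [hlp, hmp])
    rcases List.mem_append.mp hs with h | h
    exacts [hl s h, hm s h]
  simpa [hll, hml] using this

lemma wlen_inv_le (x : G) : wlen S x⁻¹ ≤ wlen S x := by
  obtain ⟨l, hl, hll, hlp⟩ := wlen_spec S hS x
  have hp : ((l.map (·⁻¹)).reverse).prod = x⁻¹ := by
    rw [← hlp]; exact (List.prod_inv_reverse l).symm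
  have hw : Word S ((l.map (·⁻¹)).reverse) := by
    intro s hs
    simp only [List.mem_reverse, List.mem_map] at hs
    obtain ⟨a, ha, rfl⟩ := hs
    rcases hl a ha with h | h
    · exact Or.inr (by simpa using h)
    · exact Or.inl h
  have := wlen_le S hS hw hp
  simpa [hll] using this

lemma wlen_inv (x : G) : wlen S x⁻¹ = wlen S x :=
  le_antisymm (wlen_inv_le S hS x) (by simpa using wlen_inv_le S hS x⁻¹)

lemma wlen_gen {s : G} (h : Sgen S s) : wlen S s ≤ 1 :=
  wlen_le S hS (l := [s]) (fun t ht => by simp only [List.mem_singleton] at ht; exact ht ▸ h) (by simp)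

end wlen

/-- left-invariant word "distance" -/
noncomputable def wd (S : Finset G) (x y : G) : ℕ := wlen S (x⁻¹ * y)

section wd
variable (S : Finset G) (hS : Subgroup.closure (S : Set G) = ⊤)
include hS

@[simp] lemma wd_self (x : G) : wd S x x = 0 := by simp [wd, wlen_one S hS]

lemma wd_triangle (x y z : G) : wd S x z ≤ wd S x y + wd S y z := by
  have : x⁻¹ * z = (x⁻¹ * y) * (y⁻¹ * z) := by group
  rw [wd, this]; exact wlen_mul S hS _ _

omit hS in
lemma wd_left_inv' (g x y : G) : wd S (g * x) (g * y) = wd S x y := by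
  unfold wd; congr 1; group

lemma wd_symm (x y : G) : wd S x y = wd S y x := by
  rw [wd, wd, ← wlen_inv S hS (x⁻¹ * y)]; congr 1; group

end wd


/-- distance from `x` to a set `W` -/
noncomputable def dW (S : Finset G) (W : Set G) (x : G) : ℕ :=
  sInf {n | ∃ w ∈ W, wd S x w = n}

section dW
variable (S : Finset G) (hS : Subgroup.closure (S : Set G) = ⊤)
include hS

lemma dW_spec {W : Set G} (hW : W.Nonempty) (x : G) :
    ∃ w ∈ W, wd S x w = dW S W x := by
  have hne : {n | ∃ w ∈ W, wd S x w = n}.Nonempty := by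
    obtain ⟨w, hw⟩ := hW
    exact ⟨wd S x w, w, hw, rfl⟩
  exact Nat.sInf_mem hne

omit hS in
lemma dW_le {W : Set G} {w : G} (hw : w ∈ W) (x : G) : dW S W x ≤ wd S x w :=
  Nat.sInf_le ⟨w, hw, rfl⟩

lemma dW_zero_mem {W : Set G} {x : G} (hx : x ∈ W) : dW S W x = 0 :=
  Nat.le_zero.mp (by simpa [wd_self S hS] using dW_le S hx x)

lemma dW_lipschitz {W : Set G} (hW : W.Nonempty) (x y : G) :
    dW S W x ≤ wd S x y + dW S W y := by
  obtain ⟨w, hw, hwd⟩ := dW_spec S hS hW y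
  calc dW S W x ≤ wd S x w := dW_le S hw x
    _ ≤ wd S x y + wd S y w := wd_triangle S hS x y w
    _ = wd S x y + dW S W y := by rw [hwd]

lemma dW_pos_notmem {W : Set G} {x : G} (h : 0 < dW S W x) : x ∉ W :=
  fun hx => by simp [dW_zero_mem S hS hx] at h

omit hS in
/-- left translation -/
lemma dW_smul {W : Set G} (g x : G) : dW S (g • W) (g * x) = dW S W x := by
  unfold dW
  congr 1
  ext n
  simp only [Set.mem_setOf_eq, Set.mem_smul_set]
  constructor
  · rintro ⟨w, ⟨w', hw', rfl⟩, h⟩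
    refine ⟨w', hw', ?_⟩
    rw [← h, smul_eq_mul, wd_left_inv' S g x w']
  · rintro ⟨w, hw, h⟩
    refine ⟨g * w, ⟨w, hw, rfl⟩, ?_⟩
    rw [wd_left_inv' S g x w]; exact h

end dW

/-- symmetrized generating Finset -/
noncomputable def SS (S : Finset G) : Finset G :=
  letI := Classical.decEq G
  S ∪ S.image (·⁻¹)

lemma mem_SS {S : Finset G} {s : G} : s ∈ SS S ↔ Sgen S s := by
  classical
  unfold SS Sgen
  constructor
  · intro h
    rcases Finset.mem_union.mp (by convert h) with h | h
    · exact Or.inl h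
    · obtain ⟨a, ha, rfl⟩ := Finset.mem_image.mp h
      exact Or.inr (by simpa using ha)
  · intro h
    apply Finset.mem_union.mpr ∘ fun h => by convert h
    rcases h with h | h
    · exact Or.inl h
    · exact Or.inr (Finset.mem_image.mpr ⟨s⁻¹, h, by simp⟩)

/-- ball of radius n around 1, as a Finset -/
noncomputable def ballF (S : Finset G) : ℕ → Finset G
  | 0 => {1}
  | n + 1 =>
    letI := Classical.decEq G
    ballF S n ∪ Finset.image₂ (fun s x => s * x) (SS S) (ballF S n)

lemma ballF_mono_succ (S : Finset G) (n : ℕ) : ballF S n ⊆ ballF S (n + 1) := by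
  classical
  intro x hx
  unfold ballF
  apply Finset.mem_union.mpr ∘ fun h => by convert h
  exact Or.inl hx

lemma ballF_mono (S : Finset G) {m n : ℕ} (h : m ≤ n) : ballF S m ⊆ ballF S n := by
  induction n with
  | zero => simpa [Nat.le_zero.mp h]
  | succ k ih =>
    by_cases he : m = k + 1
    · subst he; exact fun x hx => hx
    · have h' : m ≤ k := Nat.lt_succ_iff.mp (lt_of_le_of_ne h he)
      exact fun x hx => ballF_mono_succ S k (ih h' hx)

lemma prod_mem_ballF {S : Finset G} {l : List G} (hl : Word S l) {n : ℕ}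
    (hn : l.length ≤ n) : l.prod ∈ ballF S n := by
  classical
  induction l generalizing n with
  | nil =>
    have : (1 : G) ∈ ballF S 0 := by rw [ballF]; exact Finset.mem_singleton_self (1 : G)
    simpa using ballF_mono S (Nat.zero_le n) this
  | cons s t ih =>
    match n with
    | 0 => simp at hn
    | m + 1 =>
      have hts : t.prod ∈ ballF S m := ih (fun a ha => hl a (List.mem_cons_of_mem s ha))
        (Nat.succ_le_succ_iff.mp (by simpa using hn))
      rw [List.prod_cons]
      unfold ballF
      apply Finset.mem_union.mpr ∘ fun h => by convert h
      exact Or.inr (Finset.mem_image₂.mpr ⟨s, mem_SS.mpr (hl s List.mem_cons_self), t.prod, hts, rfl⟩)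

lemma mem_ballF_wlen {S : Finset G} {x : G} {n : ℕ} (h : x ∈ ballF S n)
    (hS : Subgroup.closure (S : Set G) = ⊤) : wlen S x ≤ n := by
  classical
  induction n generalizing x with
  | zero =>
    rw [ballF, Finset.mem_singleton] at h
    simp [h, wlen_one S hS]
  | succ m ih =>
    unfold ballF at h
    rcases Finset.mem_union.mp (by convert h) with h' | h'
    · exact (ih h').trans (Nat.le_succ m)
    · obtain ⟨s, hs, y, hy, rfl⟩ := Finset.mem_image₂.mp h'
      calc wlen S (s * y) ≤ wlen S s + wlen S y := wlen_mul S hS s y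
        _ ≤ 1 + m := Nat.add_le_add (wlen_gen S hS (mem_SS.mp hs)) (ih hy)
        _ = m + 1 := Nat.add_comm 1 m

lemma wlen_mem_ballF {S : Finset G} (hS : Subgroup.closure (S : Set G) = ⊤) {x : G} {n : ℕ}
    (h : wlen S x ≤ n) : x ∈ ballF S n := by
  obtain ⟨l, hl, hll, hlp⟩ := wlen_spec S hS x
  exact hlp ▸ prod_mem_ballF hl (hll.le.trans h)


section coset
variable {K : Subgroup G}

/-- right coset class of `x` (as a left coset of `x⁻¹`) -/
def cls (K : Subgroup G) (x : G) : G ⧸ K := QuotientGroup.mk x⁻¹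

lemma cls_eq_iff (K : Subgroup G) {x y : G} : cls K x = cls K y ↔ ∃ k ∈ K, y = k * x := by
  unfold cls
  rw [QuotientGroup.eq]
  constructor
  · intro h
    refine ⟨y * x⁻¹, ?_, by group⟩
    have : (x⁻¹)⁻¹ * y⁻¹ = x * y⁻¹ := by group
    rw [this] at h
    simpa using K.inv_mem h
  · rintro ⟨k, hk, rfl⟩
    have : (x⁻¹)⁻¹ * (k * x)⁻¹ = x * x⁻¹ * k⁻¹ := by group
    rw [this]
    simpa using K.inv_mem hk

lemma cls_mul_of_mem (K : Subgroup G) {k : G} (hk : k ∈ K) (x : G) :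
    cls K (k * x) = cls K x :=
  ((cls_eq_iff K).mpr ⟨k, hk, rfl⟩).symm

lemma HFin_iff_cls_finite (K : Subgroup G) (W : Set G) :
    HFin K W ↔ (cls K '' W).Finite := by
  constructor
  · rintro ⟨F, hF⟩
    refine Set.Finite.subset (F.finite_toSet.image (cls K)) ?_
    rintro q ⟨w, hw, rfl⟩
    obtain ⟨k, hk, f, hf, rfl⟩ := Set.mem_mul.mp (hF hw)
    exact ⟨f, hf, (cls_mul_of_mem K hk f).symm⟩
  · intro hfin
    classical
    have hrep : ∀ q ∈ hfin.toFinset, ∃ w, w ∈ W ∧ cls K w = q := by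
      intro q hq
      obtain ⟨w, hw, hq'⟩ := hfin.mem_toFinset.mp hq
      exact ⟨w, hw, hq'⟩
    refine ⟨hfin.toFinset.attach.image
      (fun q => (hrep q.1 q.2).choose), fun w hw => ?_⟩
    have hq : cls K w ∈ hfin.toFinset := hfin.mem_toFinset.mpr ⟨w, hw, rfl⟩
    set w₀ := (hrep (cls K w) hq).choose with hw₀
    obtain ⟨hw₀W, hw₀c⟩ := (hrep (cls K w) hq).choose_spec
    obtain ⟨k, hk, hkw⟩ := (cls_eq_iff K).mp hw₀c
    exact ⟨k, hk, w₀, Finset.mem_image.mpr ⟨⟨cls K w, hq⟩, Finset.mem_attach _ _, rfl⟩, hkw.symm⟩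

lemma cls_image_smul {K : Subgroup G} {k : G} (hk : k ∈ K) (W : Set G) :
    cls K '' (k • W) = cls K '' W := by
  ext q
  constructor
  · rintro ⟨w, ⟨w', hw', rfl⟩, rfl⟩
    exact ⟨w', hw', (cls_mul_of_mem K hk w').symm⟩
  · rintro ⟨w, hw, rfl⟩
    exact ⟨k * w, ⟨w, hw, rfl⟩, cls_mul_of_mem K hk w⟩

lemma not_HFin_nonempty {K : Subgroup G} {W : Set G} (h : ¬ HFin K W) : W.Nonempty := by
  rcases Set.eq_empty_or_nonempty W with rfl | hne
  · exact absurd ⟨∅, by simp⟩ h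
  · exact hne

lemma HFin_smul_iff {K : Subgroup G} {k : G} (hk : k ∈ K) (W : Set G) :
    HFin K (k • W) ↔ HFin K W := by
  rw [HFin_iff_cls_finite, HFin_iff_cls_finite]
  have : cls K '' (k • W) = cls K '' W := by
    ext q
    constructor
    · rintro ⟨w, ⟨w', hw', rfl⟩, rfl⟩
      exact ⟨w', hw', (cls_mul_of_mem K hk w').symm⟩
    · rintro ⟨w, hw, rfl⟩
      exact ⟨k * w, ⟨w, hw, rfl⟩, cls_mul_of_mem K hk w⟩
  rw [this]

end coset

section paths
variable (S : Finset G)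

/-- a single generator step -/
def Stp (x y : G) : Prop := ∃ s, Sgen S s ∧ y = x * s

/-- a step staying inside `P` -/
def StpIn (P : Set G) (x y : G) : Prop := Stp S x y ∧ x ∈ P ∧ y ∈ P

/-- reachability inside `P` -/
def ReachIn (P : Set G) : G → G → Prop := Relation.ReflTransGen (StpIn S P)

lemma Sgen_inv {s : G} (h : Sgen S s) : Sgen S s⁻¹ := by
  rcases h with h | h
  · exact Or.inr (by simpa using h)
  · exact Or.inl h

lemma Stp_symm {x y : G} (h : Stp S x y) : Stp S y x := by
  obtain ⟨s, hs, rfl⟩ := h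
  exact ⟨s⁻¹, Sgen_inv S hs, by group⟩

lemma StpIn_symm {P : Set G} {x y : G} (h : StpIn S P x y) : StpIn S P y x :=
  ⟨Stp_symm S h.1, h.2.2, h.2.1⟩

lemma ReachIn_symm {P : Set G} {x y : G} (h : ReachIn S P x y) : ReachIn S P y x :=
  (@Relation.ReflTransGen.symmetric _ (StpIn S P) ⟨fun _ _ hab => StpIn_symm S hab⟩).symm _ _ h

lemma ReachIn_trans {P : Set G} {x y z : G} (h : ReachIn S P x y) (h' : ReachIn S P y z) :
    ReachIn S P x z := Relation.ReflTransGen.trans h h'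

lemma ReachIn_mono {P Q : Set G} (hPQ : P ⊆ Q) {x y : G} (h : ReachIn S P x y) :
    ReachIn S Q x y :=
  Relation.ReflTransGen.mono (p := StpIn S Q) (fun a b hab => ⟨hab.1, hPQ hab.2.1, hPQ hab.2.2⟩) x y h

lemma ReachIn_mem_right {P : Set G} {x y : G} (h : ReachIn S P x y) (hx : x ∈ P) : y ∈ P := by
  induction h with
  | refl => exact hx
  | tail _ hbc ih => exact hbc.2.2

lemma ReachIn_smul {P : Set G} {x y : G} (g : G) (h : ReachIn S P x y) :
    ReachIn S (g • P) (g * x) (g * y) := by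
  induction h with
  | refl => exact Relation.ReflTransGen.refl
  | tail _ hbc ih =>
    refine Relation.ReflTransGen.tail ih ?_
    obtain ⟨⟨s, hs, rfl⟩, hb, hc⟩ := hbc
    exact ⟨⟨s, hs, by group⟩, ⟨_, hb, rfl⟩, ⟨_, hc, rfl⟩⟩

/-- walk along a word staying in `P`, or find a crossing out of `P` -/
lemma reach_or_cross (P : Set G) (x : G) (l : List G) (hl : Word S l) (hx : x ∈ P) :
    (ReachIn S P x (x * l.prod)) ∨
      ∃ v w, ReachIn S P x v ∧ Stp S v w ∧ v ∈ P ∧ w ∉ P := by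
  induction l generalizing x with
  | nil => left; simp only [List.prod_nil, mul_one]; exact Relation.ReflTransGen.refl
  | cons s t ih =>
    have hs : Sgen S s := hl s List.mem_cons_self
    by_cases hy : x * s ∈ P
    · have ht : Word S t := fun a ha => hl a (List.mem_cons_of_mem s ha)
      rcases ih (x * s) ht hy with h | ⟨v, w, hvw⟩
      · left
        have step : ReachIn S P x (x * s) :=
          Relation.ReflTransGen.single ⟨⟨s, hs, rfl⟩, hx, hy⟩
        have := ReachIn_trans S step h
        simpa [List.prod_cons, mul_assoc] using this
      · right
        refine ⟨v, w, ReachIn_trans S (Relation.ReflTransGen.single ⟨⟨s, hs, rfl⟩, hx, hy⟩) hvw.1,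
          hvw.2.1, hvw.2.2⟩
    · right
      exact ⟨x, x * s, Relation.ReflTransGen.refl, ⟨s, hs, rfl⟩, hx, hy⟩

/-- along a reachability chain, a property that holds at the start and fails at the end
must fail across some step -/
lemma cross_prop {P : Set G} (Q : Set G) {x y : G} (h : ReachIn S P x y)
    (hx : x ∈ Q) (hy : y ∉ Q) :
    ∃ a b, StpIn S P a b ∧ ReachIn S P x a ∧ a ∈ Q ∧ b ∉ Q := by
  induction h with
  | refl => exact absurd hx hy
  | @tail b c hab hbc ih =>
    by_cases hbQ : b ∈ Q
    · exact ⟨b, c, hbc, hab, hbQ, hy⟩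
    · obtain ⟨a', b', h1, h2, h3, h4⟩ := ih hbQ
      exact ⟨a', b', h1, h2, h3, h4⟩

/-- discrete intermediate value: crossing a level of a 1-Lipschitz function -/
lemma cross_level {P : Set G} (f : G → ℕ)
    (hlip : ∀ v w, StpIn S P v w → f w ≤ f v + 1) {x y : G}
    (h : ReachIn S P x y) (a : ℕ) (hx : f x ≤ a) (hy : a < f y) :
    ∃ v ∈ P, a < f v ∧ f v ≤ a + 1 := by
  induction h with
  | refl => omega
  | @tail b c hab hbc ih =>
    by_cases hb : f b ≤ a
    · exact ⟨c, hbc.2.2, hy, (hlip b c hbc).trans (by omega)⟩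
    · exact ih (by omega)

/-- walking a word keeps you within its length of the start -/
lemma reach_ball (x : G) (l : List G) (hl : Word S l)
    (hS : Subgroup.closure (S : Set G) = ⊤) :
    ReachIn S {v | wd S x v ≤ l.length} x (x * l.prod) := by
  induction l using List.reverseRecOn with
  | nil => simp only [List.prod_nil, mul_one]; exact Relation.ReflTransGen.refl
  | append_singleton t s ih =>
    have ht : Word S t := fun a ha => hl a (by simp [ha])
    have hs : Sgen S s := hl s (by simp)
    have base : ReachIn S {v | wd S x v ≤ t.length} x (x * t.prod) := ih ht
    have base' : ReachIn S {v | wd S x v ≤ (t ++ [s]).length} x (x * t.prod) :=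
      ReachIn_mono S (fun v hv => by simp only [Set.mem_setOf_eq, List.length_append] at *; omega)
        base
    refine Relation.ReflTransGen.tail base' ?_
    have h1 : wd S x (x * t.prod) ≤ t.length := by
      have : wlen S t.prod ≤ t.length := wlen_le S hS ht rfl
      simpa [wd] using this
    have h2 : wd S x (x * t.prod * s) ≤ t.length + 1 := by
      have htr := wd_triangle S hS x (x * t.prod) (x * t.prod * s)
      have hstep : wd S (x * t.prod) (x * t.prod * s) ≤ 1 := by
        have h3 : wlen S s ≤ 1 := wlen_gen S hS hs
        have h4 : (x * t.prod)⁻¹ * (x * t.prod * s) = s := by group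
        rw [wd, h4]; exact h3
      omega
    refine ⟨⟨s, hs, by rw [List.prod_append]; simp [mul_assoc]⟩, ?_, ?_⟩
    · simpa using h1.trans (by simp)
    · show wd S x (x * (t ++ [s]).prod) ≤ (t ++ [s]).length
      have h5 : x * (t ++ [s]).prod = x * t.prod * s := by
        rw [List.prod_append]; simp [mul_assoc]
      rw [h5]
      simpa using h2

end paths

section almostinv
variable (S : Finset G) (hS : Subgroup.closure (S : Set G) = ⊤)
include hS

lemma dW_K_of_mem_mul {K : Subgroup G} {x : G} {F : Finset G}
    (h : x ∈ (K : Set G) * (F : Set G)) : dW S (K : Set G) x ≤ F.sup (wlen S) := by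
  obtain ⟨k, hk, f, hf, rfl⟩ := Set.mem_mul.mp h
  have h1 : dW S (K : Set G) (k * f) ≤ wd S (k * f) k := dW_le S hk (k * f)
  have h2 : (k * f)⁻¹ * k = f⁻¹ := by group
  have h3 : wd S (k * f) k = wlen S f⁻¹ := by rw [wd, h2]
  rw [h3, wlen_inv S hS] at h1
  exact h1.trans (Finset.le_sup hf)

/-- vertices adjacent to the boundary of an almost invariant set are uniformly
close to the subgroup -/
lemma exists_bdry {K : Subgroup G} {U : Set G} (hU : AlmostInv K U) :
    ∃ m : ℕ, ∀ x s : G, Sgen S s → ¬(x ∈ U ↔ x * s ∈ U) →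
      dW S (K : Set G) x ≤ m ∧ dW S (K : Set G) (x * s) ≤ m := by
  classical
  set Fc : G → Finset G := fun a => (hU.2 a).choose with hFc
  have hFspec : ∀ a : G, (U \ (· * a) '' U) ∪ ((· * a) '' U \ U) ⊆ (K : Set G) * (Fc a : Set G) :=
    fun a => (hU.2 a).choose_spec
  set FF : Finset G := (SS S).biUnion (fun s => Fc s ∪ Fc s * {s⁻¹}) with hFF
  refine ⟨FF.sup (wlen S), fun x s hs hcross => ?_⟩
  have hsub1 : ∀ s ∈ SS S, (Fc s : Set G) ⊆ (FF : Set G) := by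
    intro s hsmem f hf
    exact Finset.mem_coe.mpr (Finset.mem_biUnion.mpr ⟨s, hsmem,
      Finset.mem_union_left _ (by exact_mod_cast hf)⟩)
  have hsub2 : ∀ s ∈ SS S, ((Fc s * {s⁻¹} : Finset G) : Set G) ⊆ (FF : Set G) := by
    intro s hsmem f hf
    exact Finset.mem_coe.mpr (Finset.mem_biUnion.mpr ⟨s, hsmem,
      Finset.mem_union_right _ (by exact_mod_cast hf)⟩)
  have key : ∀ y : G, y ∈ (K : Set G) * (FF : Set G) → dW S (K : Set G) y ≤ FF.sup (wlen S) :=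
    fun y hy => dW_K_of_mem_mul S hS hy
  by_cases hxU : x ∈ U
  · have hxsU : x * s ∉ U := fun h => hcross ⟨fun _ => h, fun _ => hxU⟩
    have hmem : x * s ∈ (K : Set G) * (Fc s : Set G) :=
      hFspec s (Or.inr ⟨⟨x, hxU, rfl⟩, hxsU⟩)
    obtain ⟨k, hk, f, hf, hkf⟩ := Set.mem_mul.mp hmem
    constructor
    · have hx' : x ∈ (K : Set G) * (FF : Set G) := by
        refine ⟨k, hk, f * s⁻¹, ?_, by show k * (f * s⁻¹) = x; rw [← mul_assoc, hkf]; group⟩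
        exact hsub2 s (mem_SS.mpr hs) (Finset.mul_mem_mul (by exact_mod_cast hf)
          (Finset.mem_singleton_self s⁻¹))
      exact key x hx'
    · have hxs' : x * s ∈ (K : Set G) * (FF : Set G) :=
        ⟨k, hk, f, hsub1 s (mem_SS.mpr hs) hf, hkf⟩
      exact key (x * s) hxs'
  · have hxsU : x * s ∈ U := by
      by_contra hns
      exact hcross ⟨fun h => absurd h hxU, fun h => absurd h hns⟩
    have hmem : x ∈ (K : Set G) * (Fc s⁻¹ : Set G) := by
      refine hFspec s⁻¹ (Or.inr ⟨⟨x * s, hxsU, by group⟩, hxU⟩)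
    obtain ⟨k, hk, f, hf, hkf⟩ := Set.mem_mul.mp hmem
    have hsinv : s⁻¹ ∈ SS S := mem_SS.mpr (Sgen_inv S hs)
    constructor
    · exact key x ⟨k, hk, f, hsub1 s⁻¹ hsinv hf, hkf⟩
    · refine key (x * s) ⟨k, hk, f * (s⁻¹)⁻¹, ?_, by show k * (f * (s⁻¹)⁻¹) = x * s; rw [← mul_assoc, hkf]; group⟩
      exact hsub2 s⁻¹ hsinv (Finset.mul_mem_mul (by exact_mod_cast hf)
        (Finset.mem_singleton_self _))

/-- collar lemma: points of `Aᶜ` at distance at most `lam` from `A` are uniformly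
close to `H` -/
lemma collar {H : Subgroup G} {A : Set G} (hA : AlmostInv H A) (hAne : A.Nonempty) :
    ∀ lam : ℕ, ∃ c : ℕ, ∀ x, x ∉ A → dW S A x ≤ lam → dW S (H : Set G) x ≤ c := by
  intro lam
  classical
  set Fc : G → Finset G := fun a => (hA.2 a).choose with hFc
  have hFspec : ∀ a : G, (A \ (· * a) '' A) ∪ ((· * a) '' A \ A) ⊆ (H : Set G) * (Fc a : Set G) :=
    fun a => (hA.2 a).choose_spec
  set FF : Finset G := (ballF S lam).biUnion (fun α => Fc α⁻¹) with hFF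
  refine ⟨FF.sup (wlen S), fun x hx hd => ?_⟩
  obtain ⟨a, ha, hwd⟩ := dW_spec S hS hAne x
  have hα : x⁻¹ * a ∈ ballF S lam := wlen_mem_ballF hS (by rw [← wd]; omega)
  have hmem : x ∈ (H : Set G) * (Fc (x⁻¹ * a)⁻¹ : Set G) := by
    refine hFspec (x⁻¹ * a)⁻¹ (Or.inr ⟨⟨a, ha, by group⟩, hx⟩)
  obtain ⟨h, hh, f, hf, hkf⟩ := Set.mem_mul.mp hmem
  refine dW_K_of_mem_mul S hS ⟨h, hh, f, ?_, hkf⟩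
  exact Finset.mem_coe.mpr (Finset.mem_biUnion.mpr ⟨x⁻¹ * a, hα, by exact_mod_cast hf⟩)

omit hS in
lemma dW_K_mul {K : Subgroup G} {k₀ : G} (hk₀ : k₀ ∈ K) (v : G) :
    dW S (K : Set G) (k₀ * v) = dW S (K : Set G) v := by
  have h1 : k₀ • (K : Set G) = (K : Set G) := by
    ext y
    constructor
    · rintro ⟨k, hk, rfl⟩
      exact K.mul_mem hk₀ hk
    · intro hy
      exact ⟨k₀⁻¹ * y, K.mul_mem (K.inv_mem hk₀) hy, by show k₀ • (k₀⁻¹ * y) = y; rw [smul_eq_mul]; group⟩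
  conv_lhs => rw [← h1]
  exact dW_smul S k₀ v

omit hS in
lemma dW_A_mulH {H : Subgroup G} {A : Set G} (hA : ∀ h ∈ H, h • A = A)
    {h : G} (hh : h ∈ H) (x : G) : dW S A (h * x) = dW S A x := by
  conv_lhs => rw [← hA h hh]
  exact dW_smul S h x

/-- tube connectivity for a finitely generated subgroup -/
lemma tube {K : Subgroup G} (hK : K.FG) :
    ∃ ρ : ℕ, ∀ k ∈ K, ReachIn S {v | dW S (K : Set G) v ≤ ρ} 1 k := by
  obtain ⟨T, hT⟩ := hK
  set ρ := T.sup (wlen S) with hρ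
  refine ⟨ρ, fun k hk => ?_⟩
  set Tube : Set G := {v | dW S (K : Set G) v ≤ ρ} with hTube
  have hTubeInv : ∀ k₀ ∈ K, k₀ • Tube = Tube := by
    intro k₀ hk₀
    ext v
    constructor
    · rintro ⟨u, hu, rfl⟩
      show dW S (K : Set G) (k₀ • u) ≤ ρ
      rw [smul_eq_mul, dW_K_mul S hk₀ u]
      exact hu
    · intro hv
      refine ⟨k₀⁻¹ * v, ?_, by show k₀ • (k₀⁻¹ * v) = v; rw [smul_eq_mul]; group⟩
      show dW S (K : Set G) (k₀⁻¹ * v) ≤ ρ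
      rw [dW_K_mul S (K.inv_mem hk₀) v]
      exact hv
  have hmemK : ∀ x : G, x ∈ K → x ∈ Tube → True := fun _ _ _ => trivial
  rw [← hT] at hk
  induction hk using Subgroup.closure_induction with
  | mem t ht =>
    have htK : t ∈ K := by rw [← hT]; exact Subgroup.subset_closure ht
    obtain ⟨l, hl, hll, hlp⟩ := wlen_spec S hS t
    have hreach := reach_ball S 1 l hl hS
    rw [one_mul, hlp] at hreach
    refine ReachIn_mono S ?_ hreach
    intro v hv
    simp only [Set.mem_setOf_eq] at hv ⊢
    have h1 : dW S (K : Set G) v ≤ wd S v 1 := dW_le S (K.one_mem) v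
    have h2 : wd S v 1 = wlen S v := by rw [wd, mul_one, wlen_inv S hS]
    have h3 : wd S 1 v = wlen S v := by rw [wd]; simp
    rw [h3] at hv
    rw [h2] at h1
    refine h1.trans (hv.trans ?_)
    rw [hll]
    exact Finset.le_sup (by exact_mod_cast ht)
  | one => exact Relation.ReflTransGen.refl
  | mul x y hx hy px py =>
    have hxK : x ∈ K := by rw [← hT]; exact hx
    have : ReachIn S (x • Tube) (x * 1) (x * y) := ReachIn_smul S x py
    rw [hTubeInv x hxK, mul_one] at this
    exact ReachIn_trans S px this
  | inv x hx px =>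
    have hxK : x ∈ K := by rw [← hT]; exact hx
    have h1 : ReachIn S Tube x 1 := ReachIn_symm S px
    have : ReachIn S (x⁻¹ • Tube) (x⁻¹ * x) (x⁻¹ * 1) := ReachIn_smul S x⁻¹ h1
    rw [hTubeInv x⁻¹ (K.inv_mem hxK), inv_mul_cancel, mul_one] at this
    exact this

end almostinv

section quotpath
variable (S : Finset G) (K : Subgroup G)

/-- a step in the quotient graph (allowing sliding along the subgroup) -/
def QStp (x y : G) : Prop :=
  ∃ k ∈ K, y = k * x ∨ ∃ s, Sgen S s ∧ y = k * (x * s)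

/-- paths of length at most `n` in the quotient graph staying in `𝒲` -/
def QPath (𝒲 : Set G) : ℕ → G → G → Prop
  | 0, x, y => x = y ∧ x ∈ 𝒲
  | n + 1, x, y => QPath 𝒲 n x y ∨ ∃ z, QPath 𝒲 n x z ∧ QStp S K z y ∧ y ∈ 𝒲

lemma QPath_succ {𝒲 : Set G} {n : ℕ} {x y : G} (h : QPath S K 𝒲 n x y) :
    QPath S K 𝒲 (n + 1) x y := Or.inl h

lemma QPath_mono {𝒲 : Set G} {m n : ℕ} (hmn : m ≤ n) {x y : G} (h : QPath S K 𝒲 m x y) :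
    QPath S K 𝒲 n x y := by
  induction n with
  | zero => simpa [Nat.le_zero.mp hmn] using h
  | succ p ih =>
    by_cases h' : m = p + 1
    · subst h'; exact h
    · exact QPath_succ S K (ih (Nat.lt_succ_iff.mp (lt_of_le_of_ne hmn h')))

lemma QPath_mem_left {𝒲 : Set G} {n : ℕ} {x y : G} (h : QPath S K 𝒲 n x y) : x ∈ 𝒲 := by
  induction n generalizing y with
  | zero => exact h.2
  | succ p ih => rcases h with h | ⟨z, hz, _, _⟩; exacts [ih h, ih hz]

lemma QPath_mem_right {𝒲 : Set G} {n : ℕ} {x y : G} (h : QPath S K 𝒲 n x y) : y ∈ 𝒲 := by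
  induction n generalizing y with
  | zero => exact h.1 ▸ h.2
  | succ p ih => rcases h with h | ⟨z, hz, _, hy⟩; exacts [ih h, hy]

lemma QStp_symm {x y : G} (h : QStp S K x y) : QStp S K y x := by
  obtain ⟨k, hk, h | ⟨s, hs, h⟩⟩ := h
  · exact ⟨k⁻¹, K.inv_mem hk, Or.inl (by rw [h]; group)⟩
  · exact ⟨k⁻¹, K.inv_mem hk, Or.inr ⟨s⁻¹, Sgen_inv S hs, by rw [h]; group⟩⟩

lemma QPath_cons {𝒲 : Set G} {n : ℕ} {x z y : G} (hx : x ∈ 𝒲) (hst : QStp S K x z)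
    (h : QPath S K 𝒲 n z y) : QPath S K 𝒲 (n + 1) x y := by
  induction n generalizing y with
  | zero =>
    obtain ⟨rfl, hz⟩ := h
    exact Or.inr ⟨x, ⟨rfl, hx⟩, hst, hz⟩
  | succ p ih =>
    rcases h with h | ⟨z₁, hz₁, hst₁, hy⟩
    · exact QPath_succ S K (ih h)
    · exact Or.inr ⟨z₁, ih hz₁, hst₁, hy⟩

lemma QPath_symm {𝒲 : Set G} {n : ℕ} {x y : G} (h : QPath S K 𝒲 n x y) :
    QPath S K 𝒲 n y x := by
  induction n generalizing y with
  | zero => exact ⟨h.1.symm, h.1 ▸ h.2⟩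
  | succ p ih =>
    rcases h with h | ⟨z, hz, hst, hy⟩
    · exact QPath_succ S K (ih h)
    · exact QPath_cons S K hy (QStp_symm S K hst) (ih hz)

lemma QPath_trans {𝒲 : Set G} {n m : ℕ} {x y z : G} (h : QPath S K 𝒲 n x y)
    (h' : QPath S K 𝒲 m y z) : QPath S K 𝒲 (n + m) x z := by
  induction m generalizing z with
  | zero => obtain ⟨rfl, _⟩ := h'; exact h
  | succ p ih =>
    rcases h' with h' | ⟨z₁, hz₁, hst, hz⟩
    · exact QPath_succ S K (ih h')
    · exact Or.inr ⟨z₁, ih hz₁, hst, hz⟩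

lemma ReachIn_to_QPath {𝒲 : Set G} {x y : G} (h : ReachIn S 𝒲 x y) (hx : x ∈ 𝒲) :
    ∃ n, QPath S K 𝒲 n x y := by
  induction h with
  | refl => exact ⟨0, rfl, hx⟩
  | @tail b c hab hbc ih =>
    obtain ⟨n, hn⟩ := ih
    obtain ⟨⟨s, hs, rfl⟩, hb, hc⟩ := hbc
    exact ⟨n + 1, Or.inr ⟨b, hn, ⟨1, K.one_mem, Or.inr ⟨s, hs, by group⟩⟩, hc⟩⟩

lemma QPath_lift (hS : Subgroup.closure (S : Set G) = ⊤) {𝒲 : Set G}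
    (h𝒲 : ∀ k ∈ K, ∀ w ∈ 𝒲, k * w ∈ 𝒲) {n : ℕ} {x z : G} (h : QPath S K 𝒲 n x z) :
    ∃ l : List G, Word S l ∧ l.length ≤ n ∧ cls K (x * l.prod) = cls K z ∧ x * l.prod ∈ 𝒲 := by
  induction n generalizing z with
  | zero =>
    obtain ⟨rfl, hx⟩ := h
    exact ⟨[], fun s hs => absurd hs List.not_mem_nil, by simp, by simp, by simpa using hx⟩
  | succ p ih =>
    rcases h with h | ⟨z₁, hz₁, hst, hz⟩
    · obtain ⟨l, h1, h2, h3, h4⟩ := ih h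
      exact ⟨l, h1, h2.trans (Nat.le_succ p), h3, h4⟩
    · obtain ⟨l, h1, h2, h3, h4⟩ := ih hz₁
      obtain ⟨k, hk, hcase | ⟨s, hs, hcase⟩⟩ := hst
      · exact ⟨l, h1, h2.trans (Nat.le_succ p), by rw [h3, hcase, cls_mul_of_mem K hk], h4⟩
      · obtain ⟨k₁, hk₁, hk₁e⟩ := (cls_eq_iff K).mp h3
        refine ⟨l ++ [s], ?_, ?_, ?_, ?_⟩
        · intro t ht
          rcases List.mem_append.mp ht with ht | ht
          · exact h1 t ht
          · rw [List.mem_singleton.mp ht]; exact hs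
        · simpa using Nat.succ_le_succ h2
        · have e1 : x * (l ++ [s]).prod = x * l.prod * s := by
            rw [List.prod_append]; simp [mul_assoc]
          have e2 : z₁ * s = k₁ * (x * l.prod * s) := by rw [hk₁e]; group
          have e3 : z = (k * k₁) * (x * l.prod * s) := by rw [hcase, e2]; group
          rw [e1, e3, cls_mul_of_mem K (K.mul_mem hk hk₁)]
        · have e1 : x * (l ++ [s]).prod = (k * k₁)⁻¹ * z := by
            rw [List.prod_append]
            simp only [List.prod_cons, List.prod_nil, mul_one]
            rw [hcase, hk₁e]
            group
          rw [e1]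
          exact h𝒲 _ (K.inv_mem (K.mul_mem hk hk₁)) z hz

end quotpath

section factstar
variable (S : Finset G) (hS : Subgroup.closure (S : Set G) = ⊤)

omit hS in
lemma dW_empty (x : G) : dW S (∅ : Set G) x = 0 := by
  unfold dW
  convert Nat.sInf_empty
  simp

include hS in
/-- the key growth lemma: a point of `U` deep inside `Yᶜ` forces the corner `U ∩ Yᶜ`
to meet many right cosets of `K` -/
lemma factstar {K : Subgroup G} {U : Set G} (hU : AlmostInv K U) (hUn : ¬ HFin K U)
    (hUcn : ¬ HFin K Uᶜ) :
    ∃ β₀ : ℕ, ∀ (Y : Set G) (x : G), x ∈ U →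
      (cls K '' (U ∩ Yᶜ)).Finite → dW S Y x ≤ (cls K '' (U ∩ Yᶜ)).ncard + β₀ := by
  classical
  obtain ⟨m₁, hbd⟩ := exists_bdry S hS hU
  refine ⟨(ballF S m₁).card, fun Y x hxU hfin => ?_⟩
  by_contra hgt
  push_neg at hgt
  set β₀ := (ballF S m₁).card with hβ₀
  set r := (cls K '' (U ∩ Yᶜ)).ncard + β₀ with hr
  have hYne : Y.Nonempty := by
    rcases Set.eq_empty_or_nonempty Y with rfl | h
    · rw [dW_empty S] at hgt; omega
    · exact h
  set KB : Set G := (K : Set G) * ((ballF S m₁ : Finset G) : Set G) with hKB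
  set 𝒲 : Set G := U ∪ KB with h𝒲def
  have h1ball : ∀ {n : ℕ}, (1 : G) ∈ ballF S n := by
    intro n
    have h0 : (1 : G) ∈ ballF S 0 := by rw [ballF]; exact Finset.mem_singleton_self (1 : G)
    exact ballF_mono S (Nat.zero_le n) h0
  have hKBmem : ∀ f ∈ ballF S m₁, f ∈ KB := fun f hf =>
    ⟨1, K.one_mem, f, by exact_mod_cast hf, one_mul f⟩
  have h𝒲K : ∀ k ∈ K, ∀ w ∈ 𝒲, k * w ∈ 𝒲 := by
    rintro k hk w (hw | ⟨k', hk', f, hf, rfl⟩)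
    · left
      rw [← hU.1 k hk]
      exact ⟨w, hw, rfl⟩
    · right
      exact ⟨k * k', K.mul_mem hk hk', f, hf, by group⟩
  have hx𝒲 : x ∈ 𝒲 := Or.inl hxU
  have hone : ∀ l : List G, Word S l → l.length ≤ m₁ →
      QPath S K 𝒲 l.length (1 : G) l.prod := by
    intro l
    induction l using List.reverseRecOn with
    | nil => intro _ _; exact ⟨by simp, Or.inr (hKBmem 1 h1ball)⟩
    | append_singleton t s ih =>
      intro hw hlen
      have ht : Word S t := fun a ha => hw a (by simp [ha])
      have hs : Sgen S s := hw s (by simp)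
      have htlen : t.length ≤ m₁ := by simp at hlen; omega
      have base := ih ht htlen
      have hts : (t ++ [s]).prod ∈ ballF S m₁ := prod_mem_ballF hw hlen
      have hstep : QStp S K t.prod (t ++ [s]).prod :=
        ⟨1, K.one_mem, Or.inr ⟨s, hs, by rw [List.prod_append]; simp⟩⟩
      have hres : QPath S K 𝒲 (t.length + 1) (1 : G) (t ++ [s]).prod :=
        Or.inr ⟨t.prod, base, hstep, Or.inr (hKBmem _ hts)⟩
      simpa using hres
  have hball1 : ∀ f ∈ ballF S m₁, ∃ n, QPath S K 𝒲 n f 1 := by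
    intro f hf
    obtain ⟨l, hl, hll, hlp⟩ := wlen_spec S hS f
    have hlen : l.length ≤ m₁ := by
      rw [hll]; exact mem_ballF_wlen hf hS
    have := hone l hl hlen
    rw [hlp] at this
    exact ⟨l.length, QPath_symm S K this⟩
  have hto1 : ∀ u ∈ U, ∃ n, QPath S K 𝒲 n u 1 := by
    intro u hu
    obtain ⟨ustar, hustar⟩ := not_HFin_nonempty hUcn
    obtain ⟨l, hl, hlp⟩ := exists_word S hS (u⁻¹ * ustar)
    have hend : u * l.prod = ustar := by rw [hlp]; group
    rcases reach_or_cross S U u l hl hu with hreach | ⟨v, w, hrv, ⟨s, hs, rfl⟩, hvU, hwU⟩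
    · exact absurd (ReachIn_mem_right S hreach hu) (by rw [hend]; exact hustar)
    · have hcross : ¬(v ∈ U ↔ v * s ∈ U) := fun hiff => hwU (hiff.mp hvU)
      have hdv : dW S (K : Set G) v ≤ m₁ := (hbd v s hs hcross).1
      obtain ⟨k, hkK, hwdk⟩ := dW_spec S hS (⟨1, K.one_mem⟩ : Set.Nonempty (K : Set G)) v
      have hkK' : k ∈ K := hkK
      have hflen : wlen S (k⁻¹ * v) ≤ m₁ := by
        have h1 : wlen S (v⁻¹ * k) ≤ m₁ := by
          have : wd S v k ≤ m₁ := by omega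
          exact this
        have h2 : k⁻¹ * v = (v⁻¹ * k)⁻¹ := by group
        rw [h2, wlen_inv S hS]
        exact h1
      have hfball : k⁻¹ * v ∈ ballF S m₁ := wlen_mem_ballF hS hflen
      obtain ⟨n₁, p₁⟩ :=
        ReachIn_to_QPath S K (ReachIn_mono S Set.subset_union_left hrv) (Or.inl hu)
      have hstep : QStp S K v (k⁻¹ * v) := ⟨k⁻¹, K.inv_mem hkK', Or.inl rfl⟩
      have p₂ : QPath S K 𝒲 (n₁ + 1) u (k⁻¹ * v) :=
        Or.inr ⟨v, p₁, hstep, Or.inr (hKBmem _ hfball)⟩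
      obtain ⟨n₂, p₃⟩ := hball1 _ hfball
      exact ⟨n₁ + 1 + n₂, QPath_trans S K p₂ p₃⟩
  have hconn : ∀ u ∈ U, ∃ n, QPath S K 𝒲 n x u := by
    intro u hu
    obtain ⟨n₁, p₁⟩ := hto1 x hxU
    obtain ⟨n₂, p₂⟩ := hto1 u hu
    exact ⟨n₁ + n₂, QPath_trans S K p₁ (QPath_symm S K p₂)⟩
  set R : ℕ → Set (G ⧸ K) := fun j => {q | ∃ z, QPath S K 𝒲 j x z ∧ cls K z = q} with hRdef
  have hRlift : ∀ j q, q ∈ R j → ∃ z', z' ∈ 𝒲 ∧ cls K z' = q ∧ wlen S (x⁻¹ * z') ≤ j := by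
    rintro j q ⟨z, hp, hq⟩
    obtain ⟨l, h1, h2, h3, h4⟩ := QPath_lift S K hS h𝒲K hp
    refine ⟨x * l.prod, h4, by rw [h3, hq], ?_⟩
    have he : x⁻¹ * (x * l.prod) = l.prod := by group
    rw [he]
    exact (wlen_le S hS h1 rfl).trans h2
  have hRfin : ∀ j, (R j).Finite := by
    intro j
    have hsub : R j ⊆ cls K '' ((fun b => x * b) '' ((ballF S j : Finset G) : Set G)) := by
      intro q hq
      obtain ⟨z', _, hc, hlen⟩ := hRlift j q hq
      refine ⟨z', ⟨x⁻¹ * z', by exact_mod_cast wlen_mem_ballF hS hlen, by group⟩, hc⟩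
    exact (((ballF S j).finite_toSet.image _).image _).subset hsub
  have hRmono : ∀ {j j' : ℕ}, j ≤ j' → R j ⊆ R j' := by
    rintro j j' hjj q ⟨z, hp, hq⟩
    exact ⟨z, QPath_mono S K hjj hp, hq⟩
  have hstag : ∀ j, R (j + 1) ⊆ R j → ∀ m, R m ⊆ R j := by
    intro j hj m
    induction m with
    | zero => exact hRmono (Nat.zero_le j)
    | succ p ih =>
      rintro q ⟨z, hp, rfl⟩
      rcases hp with hp | ⟨z₁, hp₁, hst, hz⟩
      · exact ih ⟨z, hp, rfl⟩
      · have h1 : cls K z₁ ∈ R j := ih ⟨z₁, hp₁, rfl⟩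
        obtain ⟨z₁', hp', hcls⟩ := h1
        obtain ⟨k₁, hk₁, hk₁e⟩ := (cls_eq_iff K).mp hcls
        refine hj ?_
        obtain ⟨k, hk, hcase | ⟨s, hs, hcase⟩⟩ := hst
        · refine ⟨z, Or.inr ⟨z₁', hp', ⟨k * k₁, K.mul_mem hk hk₁, Or.inl ?_⟩, hz⟩, rfl⟩
          rw [hcase, hk₁e]; group
        · refine ⟨z, Or.inr ⟨z₁', hp', ⟨k * k₁, K.mul_mem hk hk₁,
            Or.inr ⟨s, hs, ?_⟩⟩, hz⟩, rfl⟩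
          rw [hcase, hk₁e]; group
  have hstrict : ∀ j, ¬ R (j + 1) ⊆ R j := by
    intro j hsub
    have hUsub : cls K '' U ⊆ R j := by
      rintro q ⟨u, hu, rfl⟩
      obtain ⟨n, hp⟩ := hconn u hu
      exact hstag j hsub n ⟨u, hp, rfl⟩
    exact hUn ((HFin_iff_cls_finite K U).mpr ((hRfin j).subset hUsub))
  have hgrow : ∀ j, j + 1 ≤ (R j).ncard := by
    intro j
    induction j with
    | zero =>
      have h0 : cls K x ∈ R 0 := ⟨x, ⟨rfl, hx𝒲⟩, rfl⟩
      have := (Set.ncard_pos (hRfin 0)).mpr ⟨_, h0⟩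
      omega
    | succ p ih =>
      have hss : R p ⊂ R (p + 1) := ⟨hRmono (Nat.le_succ p), fun hsub => hstrict p hsub⟩
      have := Set.ncard_lt_ncard hss (hRfin (p + 1))
      omega
  have hsubfin : R r ⊆ (cls K '' (U ∩ Yᶜ)) ∪
      (cls K '' ((ballF S m₁ : Finset G) : Set G)) := by
    intro q hq
    obtain ⟨z', hz𝒲, hc, hlen⟩ := hRlift r q hq
    rcases hz𝒲 with hzU | ⟨k, hk, f, hfb, rfl⟩
    · left
      have hzY : z' ∉ Y := by
        have hlip2 := dW_lipschitz S hS hYne x z'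
        have hwd : wd S x z' ≤ r := hlen
        have hpos : 0 < dW S Y z' := by omega
        exact dW_pos_notmem S hS hpos
      exact ⟨z', ⟨hzU, hzY⟩, hc⟩
    · right
      exact ⟨f, hfb, by rw [← hc, cls_mul_of_mem K hk]⟩
  have hcard1 : (cls K '' ((ballF S m₁ : Finset G) : Set G)).ncard ≤ β₀ := by
    have h1 := Set.ncard_image_le (f := cls K) (s := ((ballF S m₁ : Finset G) : Set G))
      ((ballF S m₁).finite_toSet)
    rwa [Set.ncard_coe_finset] at h1
  have hfinal := Set.ncard_le_ncard hsubfin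
    (hfin.union (((ballF S m₁).finite_toSet).image _))
  have hle := Set.ncard_union_le (cls K '' (U ∩ Yᶜ))
    (cls K '' ((ballF S m₁ : Finset G) : Set G))
  have hg := hgrow r
  omega

end factstar

end ScottProof

/-- There is `D > 0` such that any translate `gU` with `gU ≤ A` is contained in the
`D`-neighbourhood of `A` in the word metric. -/
theorem translate_le_implies_in_bounded_neighbourhood
    {G : Type*} [Group G] (S : Finset G) (hS : Subgroup.closure (S : Set G) = ⊤)
    (H K : Subgroup G) (hH : H.FG) (hK : K.FG) (A U : Set G)
    (hA : NontrivAI H A) (hU : NontrivAI K U) :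
    ∃ D : ℕ, 0 < D ∧ ∀ g : G,
      ((g • U) ∩ Aᶜ = ∅ ∨
        (HFin K (g⁻¹ • ((g • U) ∩ Aᶜ)) ∧ ¬ HFin K (g⁻¹ • ((g • U) ∩ A)) ∧
          ¬ HFin K (g⁻¹ • ((g • U)ᶜ ∩ A)) ∧ ¬ HFin K (g⁻¹ • ((g • U)ᶜ ∩ Aᶜ)))) →
      g • U ⊆ {x : G | ∃ a ∈ A, InBall S D a x} := by
  classical
  open ScottProof in
  obtain ⟨hAai, hAn, hAcn⟩ := hA
  obtain ⟨hUai, hUn, hUcn⟩ := hU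
  have hAne : A.Nonempty := not_HFin_nonempty hAn
  have hAcne : Aᶜ.Nonempty := not_HFin_nonempty hAcn
  obtain ⟨mA, hbdA⟩ := exists_bdry S hS hAai
  obtain ⟨mU, hbdU⟩ := exists_bdry S hS hUai
  obtain ⟨ρH, htubeH⟩ := tube S hS hH
  obtain ⟨ρK, htubeK⟩ := tube S hS hK
  obtain ⟨β₀, hfact⟩ := factstar S hS hUai hUn hUcn
  set c₀ := dW S A 1 with hc₀def
  choose ccol hccol using collar S hS hAai hAne
  set mρ := max mA ρH with hmρdef
  set c₂ := mρ + c₀ with hc₂def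
  set c₃ := c₂ + mU with hc₃def
  set c₅ := ccol (c₃ + 1) + ρK with hc₅def
  set c₉ := c₃ + 1 + mU with hc₉def
  set chat := ccol (c₉ + 1) with hchatdef
  set Dd : Set G := {v | c₉ + 1 ≤ dW S A v} with hDddef
  have hMbex : ∀ b : G, ∃ Mb : ℕ,
      (¬ ∀ n : ℕ, ∃ y, ReachIn S Dd b y ∧ n ≤ dW S A y) →
      ∀ y, ReachIn S Dd b y → dW S A y ≤ Mb := by
    intro b
    by_cases hb : ∀ n : ℕ, ∃ y, ReachIn S Dd b y ∧ n ≤ dW S A y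
    · exact ⟨0, fun hc => absurd hb hc⟩
    · push_neg at hb
      obtain ⟨n, hn⟩ := hb
      exact ⟨n, fun _ y hy => by have := hn y hy; omega⟩
  choose Mb hMb using hMbex
  set Mstar := (ballF S chat).sup Mb with hMstardef
  set Nmax := (ballF S c₅).sup (fun σ => (cls K '' (U ∩ (σ⁻¹ • Aᶜ))).ncard) with hNmaxdef
  set D := Nmax + β₀ + Mstar + c₉ + 2 with hDdef
  have hlipstep : ∀ (v s : G), Sgen S s → dW S A (v * s) ≤ dW S A v + 1 := by
    intro v s hs
    have h1 := dW_lipschitz S hS hAne (v * s) v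
    have h2 : wd S (v * s) v = wlen S s⁻¹ := by
      rw [wd]; congr 1; group
    rw [wlen_inv S hS] at h2
    have h3 : wlen S s ≤ 1 := wlen_gen S hS hs
    omega
  refine ⟨D, by omega, ?_⟩
  intro g hg
  have hVmem : ∀ z : G, z ∈ g • U ↔ g⁻¹ * z ∈ U := by
    intro z
    rw [Set.mem_smul_set_iff_inv_smul_mem]
    rfl
  have hYset : g⁻¹ • A = (fun Y : Set G => Y) (g⁻¹ • A) := rfl
  set Y : Set G := g⁻¹ • A with hYdef
  have hYmem : ∀ x : G, x ∈ Y ↔ g * x ∈ A := by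
    intro x
    rw [hYdef, Set.mem_smul_set_iff_inv_smul_mem]
    simp
  have hdepthY : ∀ x : G, dW S Y x = dW S A (g * x) := by
    intro x
    have := dW_smul S (W := Y) g x
    rw [hYdef] at this ⊢
    rw [smul_inv_smul] at this
    exact this.symm
  have main : ∀ w ∈ g • U, w ∉ A → dW S A w ≤ D := by
    rcases hg with hg0 | ⟨hyp₁, hyp₂, hyp₃, hyp₄⟩
    · intro w hwV hwA
      exact absurd (Set.mem_inter hwV hwA) (by rw [hg0]; exact Set.notMem_empty w)
    · -- rewrite the corner hypotheses
      have hcompl : g⁻¹ • ((g • U)ᶜ) = Uᶜ := by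
        rw [Set.smul_set_compl, inv_smul_smul]
      have hAc : g⁻¹ • (Aᶜ) = Yᶜ := by rw [Set.smul_set_compl, hYdef]
      have hyp₁' : HFin K (U ∩ Yᶜ) := by
        rwa [Set.smul_set_inter, inv_smul_smul, hAc] at hyp₁
      have hyp₂' : ¬ HFin K (U ∩ Y) := by
        rw [Set.smul_set_inter, inv_smul_smul] at hyp₂
        exact hyp₂
      have hyp₃' : ¬ HFin K (Uᶜ ∩ Y) := by
        rw [Set.smul_set_inter, hcompl] at hyp₃
        exact hyp₃
      -- a point of (g • U) ∩ A and a point of (g • U)ᶜ ∩ A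
      obtain ⟨u₀, hu₀U, hu₀Y⟩ := not_HFin_nonempty hyp₂'
      obtain ⟨u₁, hu₁U, hu₁Y⟩ := not_HFin_nonempty hyp₃'
      have hpV : g * u₀ ∈ g • U := (hVmem (g * u₀)).mpr (by simpa using hu₀U)
      have hpA : g * u₀ ∈ A := (hYmem u₀).mp hu₀Y
      have hqV : g * u₁ ∉ g • U := by
        intro hc
        exact hu₁U (by simpa using (hVmem (g * u₁)).mp hc)
      have hqA : g * u₁ ∈ A := (hYmem u₁).mp hu₁Y
      -- the shallow connected set 𝒮
      set TH : Set G := {v | dW S (H : Set G) v ≤ mρ} with hTHdef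
      set 𝒮 : Set G := A ∪ TH with h𝒮def
      have h𝒮depth : ∀ v ∈ 𝒮, dW S A v ≤ c₂ := by
        rintro v (hv | hv)
        · rw [dW_zero_mem S hS hv]; omega
        · obtain ⟨h, hh, hwdh⟩ := dW_spec S hS (⟨1, H.one_mem⟩ : Set.Nonempty (H : Set G)) v
          have hlip := dW_lipschitz S hS hAne v h
          have hdAh : dW S A h = c₀ := by
            have := dW_A_mulH S hAai.1 (hh : h ∈ H) 1
            simpa using this
          have hv' : dW S (H : Set G) v ≤ mρ := hv
          omega
      have hAtoTH : ∀ p₀ ∈ A, ∃ v ∈ TH, ReachIn S 𝒮 p₀ v := by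
        intro p₀ hp₀
        obtain ⟨y₀, hy₀⟩ := hAcne
        obtain ⟨l, hl, hlp⟩ := exists_word S hS (p₀⁻¹ * y₀)
        rcases reach_or_cross S A p₀ l hl hp₀ with hreach | ⟨v, w', hrv, ⟨s, hs, rfl⟩, hvA, hwA'⟩
        · exfalso
          have := ReachIn_mem_right S hreach hp₀
          rw [show p₀ * l.prod = y₀ from by rw [hlp]; group] at this
          exact hy₀ this
        · have hcross : ¬(v ∈ A ↔ v * s ∈ A) := fun hiff => hwA' (hiff.mp hvA)
          have hdv : dW S (H : Set G) v ≤ mA := (hbdA v s hs hcross).1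
          refine ⟨v, by simp only [hTHdef, Set.mem_setOf_eq]; omega, ?_⟩
          exact ReachIn_mono S Set.subset_union_left hrv
      have hTHtoH : ∀ v ∈ TH, ∃ h ∈ H, ReachIn S 𝒮 v h := by
        intro v hv
        obtain ⟨h, hh, hwdh⟩ := dW_spec S hS (⟨1, H.one_mem⟩ : Set.Nonempty (H : Set G)) v
        obtain ⟨l, hl, hll, hlp⟩ := wlen_spec S hS (h⁻¹ * v)
        have hrb := reach_ball S h l hl hS
        rw [show h * l.prod = v from by rw [hlp]; group] at hrb
        have hsub : {u | wd S h u ≤ l.length} ⊆ 𝒮 := by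
          intro u hu
          right
          show dW S (H : Set G) u ≤ mρ
          have h1 : dW S (H : Set G) u ≤ wd S u h := dW_le S hh u
          have h2 : wd S u h = wd S h u := wd_symm S hS u h
          have h3 : wd S h u ≤ l.length := hu
          have h4 : l.length = wlen S (h⁻¹ * v) := hll
          have h5 : wlen S (h⁻¹ * v) = wd S h v := rfl
          have h6 : wd S h v = wd S v h := wd_symm S hS h v
          have hv' : dW S (H : Set G) v ≤ mρ := hv
          omega
        exact ⟨h, hh, ReachIn_symm S (ReachIn_mono S hsub hrb)⟩
      have hHtoH : ∀ h₁ ∈ H, ∀ h₂ ∈ H, ReachIn S 𝒮 h₁ h₂ := by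
        intro h₁ hh₁ h₂ hh₂
        have hsub : {v | dW S (H : Set G) v ≤ ρH} ⊆ 𝒮 := by
          intro v hv
          right
          show dW S (H : Set G) v ≤ mρ
          have : dW S (H : Set G) v ≤ ρH := hv
          omega
        have t1 := ReachIn_mono S hsub (htubeH h₁ hh₁)
        have t2 := ReachIn_mono S hsub (htubeH h₂ hh₂)
        exact ReachIn_trans S (ReachIn_symm S t1) t2
      have hconn𝒮 : ∀ p₀ ∈ A, ∀ q₀ ∈ A, ReachIn S 𝒮 p₀ q₀ := by
        intro p₀ hp₀ q₀ hq₀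
        obtain ⟨vp, hvp, hrp⟩ := hAtoTH p₀ hp₀
        obtain ⟨vq, hvq, hrq⟩ := hAtoTH q₀ hq₀
        obtain ⟨hp', hhp', hrp'⟩ := hTHtoH vp hvp
        obtain ⟨hq', hhq', hrq'⟩ := hTHtoH vq hvq
        exact ReachIn_trans S hrp (ReachIn_trans S hrp'
          (ReachIn_trans S (hHtoH hp' hhp' hq' hhq')
            (ReachIn_trans S (ReachIn_symm S hrq') (ReachIn_symm S hrq))))
      -- the anchor: a point of gK of uniformly bounded depth
      obtain ⟨z, zz, ⟨⟨s, hs, rfl⟩, hz𝒮, _⟩, _, hzV, hzsV⟩ :=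
        cross_prop S (g • U) (hconn𝒮 (g * u₀) hpA (g * u₁) hqA) hpV hqV
      have hcrossV : ¬(g⁻¹ * z ∈ U ↔ g⁻¹ * z * s ∈ U) := by
        intro hiff
        apply hzsV
        rw [hVmem (z * s), ← mul_assoc]
        exact hiff.mp ((hVmem z).mp hzV)
      have hdz : dW S (K : Set G) (g⁻¹ * z) ≤ mU := (hbdU _ s hs hcrossV).1
      obtain ⟨k', hk'K, hwdk'⟩ :=
        dW_spec S hS (⟨1, K.one_mem⟩ : Set.Nonempty (K : Set G)) (g⁻¹ * z)
      have hk'K' : k' ∈ K := hk'K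
      have hanchor : dW S A (g * k') ≤ c₃ := by
        have h1 := dW_lipschitz S hS hAne (g * k') z
        have e : g * (g⁻¹ * z) = z := by group
        have h2 : wd S (g * k') z = wd S k' (g⁻¹ * z) := by
          calc wd S (g * k') z = wd S (g * k') (g * (g⁻¹ * z)) := by rw [e]
            _ = wd S k' (g⁻¹ * z) := wd_left_inv' S g k' _
        have h3 : wd S k' (g⁻¹ * z) = wd S (g⁻¹ * z) k' := wd_symm S hS k' (g⁻¹ * z)
        have h4 := h𝒮depth z hz𝒮
        omega
      intro w hwV hwA
      by_cases hσ : ∃ kk ∈ K, dW S (H : Set G) (g * kk) ≤ c₅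
      · -- the case where gK passes close to H
        obtain ⟨kk, hkkK, hkkH⟩ := hσ
        obtain ⟨h, hhH, hwdh⟩ :=
          dW_spec S hS (⟨1, H.one_mem⟩ : Set.Nonempty (H : Set G)) (g * kk)
        have hhH' : h ∈ H := hhH
        set σ := h⁻¹ * (g * kk) with hσdef
        have hσball : σ ∈ ballF S c₅ := by
          apply wlen_mem_ballF hS
          have e1 : σ⁻¹ = (g * kk)⁻¹ * h := by rw [hσdef]; group
          have e2 : wlen S σ = wlen S σ⁻¹ := (wlen_inv S hS σ).symm
          rw [e2, e1]
          exact (by omega : wd S (g * kk) h ≤ c₅)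
        have hYσ : U ∩ (σ⁻¹ • Aᶜ) = kk⁻¹ • (U ∩ Yᶜ) := by
          have e1 : σ⁻¹ • (Aᶜ : Set G) = kk⁻¹ • (Yᶜ : Set G) := by
            rw [hσdef]
            have e0 : (h⁻¹ * (g * kk))⁻¹ = kk⁻¹ * (g⁻¹ * h) := by group
            rw [e0, mul_smul, mul_smul]
            congr 1
            rw [Set.smul_set_compl, hAai.1 h hhH', ← Set.smul_set_compl]
          rw [e1, Set.smul_set_inter]
          congr 1
          exact (hUai.1 kk⁻¹ (K.inv_mem hkkK)).symm
        have himg : cls K '' (U ∩ Yᶜ) = cls K '' (U ∩ (σ⁻¹ • Aᶜ)) := by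
          rw [hYσ, cls_image_smul (K.inv_mem hkkK)]
        have hxU' : g⁻¹ * w ∈ U := (hVmem w).mp hwV
        have hfin' : (cls K '' (U ∩ Yᶜ)).Finite := (HFin_iff_cls_finite K _).mp hyp₁'
        have happ := hfact Y (g⁻¹ * w) hxU' hfin'
        have hN : (cls K '' (U ∩ Yᶜ)).ncard ≤ Nmax := by
          rw [himg]
          exact Finset.le_sup (f := fun σ => (cls K '' (U ∩ σ⁻¹ • Aᶜ)).ncard) hσball
        have hdw : dW S Y (g⁻¹ * w) = dW S A w := by
          rw [hdepthY (g⁻¹ * w)]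
          congr 1
          group
        omega
      · push_neg at hσ
        have hshallow : ∀ kk ∈ K, dW S A (g * kk) ≤ c₃ + 1 := by
          intro kk hkk
          by_contra hdeep1
          push_neg at hdeep1
          have t1 := htubeK k' hk'K'
          have t2 := htubeK kk hkk
          have tpath : ReachIn S {v | dW S (K : Set G) v ≤ ρK} k' kk :=
            ReachIn_trans S (ReachIn_symm S t1) t2
          have tpath' := ReachIn_smul S g tpath
          have hlip' : ∀ v w', StpIn S (g • {v | dW S (K : Set G) v ≤ ρK}) v w' →
              dW S A w' ≤ dW S A v + 1 := by
            rintro v w' ⟨⟨s', hs', rfl⟩, _, _⟩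
            exact hlipstep v s' hs'
          obtain ⟨v, hvP, hv1, hv2⟩ :=
            cross_level S (f := dW S A) hlip' tpath' c₃ hanchor (by omega)
          have hvnA : v ∉ A := dW_pos_notmem S hS (by omega)
          have hvH : dW S (H : Set G) v ≤ ccol (c₃ + 1) := hccol (c₃ + 1) v hvnA (by omega)
          obtain ⟨u, huT, rfl⟩ := hvP
          obtain ⟨k₂, hk₂K, hwdk₂⟩ :=
            dW_spec S hS (⟨1, K.one_mem⟩ : Set.Nonempty (K : Set G)) u
          have hk₂K' : k₂ ∈ K := hk₂K
          have hlipH := dW_lipschitz S hS (⟨1, H.one_mem⟩ : Set.Nonempty (H : Set G))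
            (g * k₂) (g • u)
          have hwdgu : wd S (g * k₂) (g • u) = wd S u k₂ := by
            show wd S (g * k₂) (g * u) = wd S u k₂
            rw [wd_left_inv' S g k₂ u, wd_symm S hS k₂ u]
          have hcontra := hσ k₂ hk₂K'
          have hvH' : dW S (H : Set G) (g • u) ≤ ccol (c₃ + 1) := hvH
          have huT' : dW S (K : Set G) u ≤ ρK := huT
          omega
        have hbshallow : ∀ z₀ s₀, Sgen S s₀ → ¬(z₀ ∈ g • U ↔ z₀ * s₀ ∈ g • U) →
            dW S A z₀ ≤ c₉ := by
          intro z₀ s₀ hs₀ hcr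
          have e : g⁻¹ * (z₀ * s₀) = g⁻¹ * z₀ * s₀ := by group
          have hcr' : ¬(g⁻¹ * z₀ ∈ U ↔ g⁻¹ * z₀ * s₀ ∈ U) := by
            intro hiff
            apply hcr
            rw [hVmem z₀, hVmem (z₀ * s₀), e]
            exact hiff
          have hdz₀ : dW S (K : Set G) (g⁻¹ * z₀) ≤ mU := (hbdU _ s₀ hs₀ hcr').1
          obtain ⟨k₃, hk₃K, hwdk₃⟩ :=
            dW_spec S hS (⟨1, K.one_mem⟩ : Set.Nonempty (K : Set G)) (g⁻¹ * z₀)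
          have hk₃K' : k₃ ∈ K := hk₃K
          have hsh := hshallow k₃ hk₃K'
          have hlipA := dW_lipschitz S hS hAne z₀ (g * k₃)
          have hwdz : wd S z₀ (g * k₃) = wd S (g⁻¹ * z₀) k₃ := by
            calc wd S z₀ (g * k₃) = wd S (g * (g⁻¹ * z₀)) (g * k₃) := by
                  rw [show g * (g⁻¹ * z₀) = z₀ from by group]
              _ = wd S (g⁻¹ * z₀) k₃ := wd_left_inv' S g _ _
          omega
        have hprop : ∀ y, ReachIn S Dd w y → y ∈ g • U := by
          intro y hy
          induction hy with
          | refl => exact hwV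
          | @tail b c hab hbc ih =>
            by_contra hcV
            obtain ⟨⟨s₀, hs₀, rfl⟩, hbD, hcD⟩ := hbc
            have hb := hbshallow b s₀ hs₀ (fun hiff => hcV (hiff.mp ih))
            have hbD' : c₉ + 1 ≤ dW S A b := hbD
            omega
        by_contra hdeepw
        push_neg at hdeepw
        have hwD : w ∈ Dd := by
          show c₉ + 1 ≤ dW S A w
          omega
        obtain ⟨a₀, ha₀⟩ := hAne
        obtain ⟨l, hl, hlp⟩ := exists_word S hS (w⁻¹ * a₀)
        rcases reach_or_cross S Dd w l hl hwD with
          hreach | ⟨v₀, w₁, hrv₀, ⟨s₀, hs₀, rfl⟩, hv₀D, hw₁D⟩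
        · have hmem := ReachIn_mem_right S hreach hwD
          rw [show w * l.prod = a₀ from by rw [hlp]; group] at hmem
          have h0 : c₉ + 1 ≤ dW S A a₀ := hmem
          rw [dW_zero_mem S hS ha₀] at h0
          omega
        · have hv₀D' : c₉ + 1 ≤ dW S A v₀ := hv₀D
          have hnw₁ : ¬ (c₉ + 1 ≤ dW S A (v₀ * s₀)) := hw₁D
          have hstep2 : dW S A v₀ ≤ dW S A (v₀ * s₀) + 1 := by
            have h0 := hlipstep (v₀ * s₀) s₀⁻¹ (Sgen_inv S hs₀)
            rw [show v₀ * s₀ * s₀⁻¹ = v₀ from by group] at h0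
            exact h0
          have hup : dW S A v₀ ≤ c₉ + 1 := by omega
          have hv₀nA : v₀ ∉ A := dW_pos_notmem S hS (by omega)
          have hv₀H : dW S (H : Set G) v₀ ≤ chat := hccol (c₉ + 1) v₀ hv₀nA hup
          obtain ⟨h₀, hh₀H, hwdh₀⟩ :=
            dW_spec S hS (⟨1, H.one_mem⟩ : Set.Nonempty (H : Set G)) v₀
          have hh₀H' : h₀ ∈ H := hh₀H
          have hbball : h₀⁻¹ * v₀ ∈ ballF S chat := by
            apply wlen_mem_ballF hS
            have e1 : h₀⁻¹ * v₀ = (v₀⁻¹ * h₀)⁻¹ := by group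
            rw [e1, wlen_inv S hS]
            exact (by omega : wd S v₀ h₀ ≤ chat)
          have hDdinv : ∀ hh, hh ∈ H → hh • Dd = Dd := by
            intro hh hhh
            ext v
            constructor
            · rintro ⟨u', hu', rfl⟩
              show c₉ + 1 ≤ dW S A (hh * u')
              rw [dW_A_mulH S hAai.1 hhh u']
              exact hu'
            · intro hv
              refine ⟨hh⁻¹ * v, ?_, by show hh • (hh⁻¹ * v) = v; rw [smul_eq_mul]; group⟩
              show c₉ + 1 ≤ dW S A (hh⁻¹ * v)
              rw [dW_A_mulH S hAai.1 (H.inv_mem hhh) v]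
              exact hv
          have hUnb : ∀ n : ℕ, ∃ y, ReachIn S Dd (h₀⁻¹ * v₀) y ∧ n ≤ dW S A y := by
            by_contra hnb
            have hbound := hMb (h₀⁻¹ * v₀) hnb
            have hr2 : ReachIn S Dd v₀ w := ReachIn_symm S hrv₀
            have hr3 := ReachIn_smul S h₀⁻¹ hr2
            rw [hDdinv h₀⁻¹ (H.inv_mem hh₀H')] at hr3
            have hbw := hbound (h₀⁻¹ * w) hr3
            have he : dW S A (h₀⁻¹ * w) = dW S A w := dW_A_mulH S hAai.1 (H.inv_mem hh₀H') w
            have hMle : Mb (h₀⁻¹ * v₀) ≤ Mstar := Finset.le_sup hbball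
            omega
          have hfin' : (cls K '' (U ∩ Yᶜ)).Finite := (HFin_iff_cls_finite K _).mp hyp₁'
          obtain ⟨y, hry, hdy⟩ := hUnb ((cls K '' (U ∩ Yᶜ)).ncard + β₀ + 1)
          have hry' : ReachIn S Dd v₀ (h₀ * y) := by
            have hr := ReachIn_smul S h₀ hry
            rw [hDdinv h₀ hh₀H'] at hr
            rw [show h₀ * (h₀⁻¹ * v₀) = v₀ from by group] at hr
            exact hr
          have hrwy : ReachIn S Dd w (h₀ * y) := ReachIn_trans S hrv₀ hry'
          have hyV : h₀ * y ∈ g • U := hprop _ hrwy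
          have hyU : g⁻¹ * (h₀ * y) ∈ U := (hVmem _).mp hyV
          have happ := hfact Y (g⁻¹ * (h₀ * y)) hyU hfin'
          have hdy' : dW S Y (g⁻¹ * (h₀ * y)) = dW S A (h₀ * y) := by
            rw [hdepthY]
            congr 1
            group
          have hdy'' : dW S A (h₀ * y) = dW S A y := dW_A_mulH S hAai.1 hh₀H' y
          omega



  intro w hw
  by_cases hwA : w ∈ A
  · exact ⟨w, hwA, [], fun s hs => absurd hs List.not_mem_nil, Nat.zero_le D, by simp⟩
  · have hd := main w hw hwA
    obtain ⟨a, ha, hwd⟩ := dW_spec S hS hAne w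
    obtain ⟨l, hl, hll, hlp⟩ := wlen_spec S hS (a⁻¹ * w)
    refine ⟨a, ha, l, hl, ?_, by rw [hlp]; group⟩
    rw [hll]
    have hsym := wd_symm S hS w a
    have : wd S a w = wlen S (a⁻¹ * w) := rfl
    omega
end

section
/- Let G be a finitely generated group, let Y be a nontrivial H-almost invariant subset of G and Z a nontrivial K-almost invariant subset of G, suppose Y and Z are equivalent, and suppose each of Y and Z is in good position. Then the stabilisers of Y and Z under the left multiplication action of G on subsets of G are equal: {g ∈ G : gY = Y} = {g ∈ G : gZ = Z}. -/
open Pointwise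

universe u v

section AuxiliaryLemmas

variable {G : Type*} [Group G] [DecidableEq G]

private lemma hfin_mono {H : Subgroup G} {W W' : Set G} (hWW : W ⊆ W') (h : HFin H W') :
    HFin H W := by
  obtain ⟨F, hF⟩ := h
  exact ⟨F, hWW.trans hF⟩

private lemma hfin_union {H : Subgroup G} {A B : Set G} (hA : HFin H A) (hB : HFin H B) :
    HFin H (A ∪ B) := by
  obtain ⟨F₁, h₁⟩ := hA
  obtain ⟨F₂, h₂⟩ := hB
  refine ⟨F₁ ∪ F₂, ?_⟩
  rw [Finset.coe_union, Set.mul_union]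
  exact Set.union_subset_union h₁ h₂

private lemma nonempty_of_not_hfin {H : Subgroup G} {W : Set G} (h : ¬ HFin H W) :
    W.Nonempty := by
  rcases Set.eq_empty_or_nonempty W with he | hne
  · exact absurd ⟨∅, by simp [he]⟩ h
  · exact hne

private lemma mul_sub_left {A B : Set G} {F : Finset G} (h : A ⊆ B) :
    A * (F : Set G) ⊆ B * (F : Set G) := by
  intro x hx
  obtain ⟨a, ha, f, hf, rfl⟩ := Set.mem_mul.mp hx
  exact Set.mul_mem_mul (h ha) hf

private lemma subset_mul_trans {W P Q : Set G} {F T : Finset G}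
    (h1 : W ⊆ P * (F : Set G)) (h2 : P ⊆ Q * (T : Set G)) :
    W ⊆ Q * ((T * F : Finset G) : Set G) := by
  intro x hx
  obtain ⟨p, hp, f, hf, rfl⟩ := Set.mem_mul.mp (h1 hx)
  obtain ⟨q, hq, t, ht, rfl⟩ := Set.mem_mul.mp (h2 hp)
  refine Set.mem_mul.mpr ⟨q, hq, t * f, ?_, (mul_assoc _ _ _).symm⟩
  rw [Finset.coe_mul]
  exact Set.mul_mem_mul ht hf

private lemma smul_subset_mul {W P : Set G} {F : Finset G} (g : G)
    (h : W ⊆ P * (F : Set G)) : g • W ⊆ (g • P) * (F : Set G) := by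
  intro x hx
  obtain ⟨w, hw, hwx⟩ := Set.mem_smul_set.mp hx
  obtain ⟨p, hp, f, hf, rfl⟩ := Set.mem_mul.mp (h hw)
  refine Set.mem_mul.mpr ⟨g • p, Set.smul_mem_smul_set hp, f, hf, ?_⟩
  rw [← hwx]
  simp [smul_eq_mul, mul_assoc]

private lemma hfin_image_mul_right {H : Subgroup G} {W : Set G} (a : G) (h : HFin H W) :
    HFin H ((· * a) '' W) := by
  obtain ⟨F, hF⟩ := h
  refine ⟨F * {a}, ?_⟩
  rintro x ⟨w, hw, rfl⟩
  obtain ⟨p, hp, f, hf, rfl⟩ := Set.mem_mul.mp (hF hw)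
  refine Set.mem_mul.mpr ⟨p, hp, f * a, ?_, (mul_assoc _ _ _).symm⟩
  rw [Finset.coe_mul, Finset.coe_singleton]
  exact Set.mul_mem_mul hf rfl

private lemma exists_pow_mem {K : Subgroup G} {F : Finset G} {g : G}
    (h : ∀ n : ℕ, g ^ n ∈ (K : Set G) * (F : Set G)) :
    ∃ m : ℕ, 1 ≤ m ∧ g ^ m ∈ K := by
  classical
  have h' : ∀ n : ℕ, ∃ f : G, f ∈ F ∧ ∃ k : G, k ∈ K ∧ k * f = g ^ n := by
    intro n
    obtain ⟨k, hk, f, hf, he⟩ := Set.mem_mul.mp (h n)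
    exact ⟨f, by exact_mod_cast hf, k, by exact_mod_cast hk, he⟩
  choose f hfF k hkK hke using h'
  have key : ∀ i j : ℕ, i < j → f i = f j → ∃ m : ℕ, 1 ≤ m ∧ g ^ m ∈ K := by
    intro i j hlt hfeq
    refine ⟨j - i, by omega, ?_⟩
    have hji : g ^ (j - i) = g ^ j * (g ^ i)⁻¹ := by
      rw [eq_mul_inv_iff_mul_eq, ← pow_add]
      congr 1
      omega
    have hkk : g ^ j * (g ^ i)⁻¹ = k j * (k i)⁻¹ := by
      rw [← hke i, ← hke j, hfeq]
      group
    rw [hji, hkk]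
    exact mul_mem (hkK j) (inv_mem (hkK i))
  have hmap : ∀ n ∈ Finset.range (F.card + 1), f n ∈ F := fun n _ => hfF n
  obtain ⟨i, hi, j, hj, hij, hfeq⟩ :=
    Finset.exists_ne_map_eq_of_card_lt_of_maps_to
      (by simpa using Nat.lt_succ_self F.card) hmap
  rcases hij.lt_or_gt with hlt | hlt
  · exact key i j hlt hfeq
  · exact key j i hlt hfeq.symm

private lemma smul_eq_of_nested {g : G} {Z : Set G} (hsub : g • Z ⊆ Z)
    (m : ℕ) (hm : 1 ≤ m) (hfix : g ^ m • Z = Z) : g • Z = Z := by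
  have key : ∀ n : ℕ, g ^ (n + 1) • Z ⊆ g • Z := by
    intro n
    induction n with
    | zero => rw [pow_one]
    | succ n ih =>
        calc g ^ (n + 1 + 1) • Z = g ^ (n + 1) • (g • Z) := by rw [smul_smul, ← pow_succ]
        _ ⊆ g ^ (n + 1) • Z := Set.smul_set_mono hsub
        _ ⊆ g • Z := ih
  refine Set.Subset.antisymm hsub ?_
  obtain ⟨n, rfl⟩ : ∃ n, m = n + 1 := ⟨m - 1, by omega⟩
  intro x hx
  exact key n (by rw [hfix]; exact hx)

private lemma sdiff_smul_subset {Y Z : Set G} {p : G} (hpY : p • Y = Y) :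
    (Z \ p • Z) ∪ (p • Z \ Z) ⊆ ((Y \ Z) ∪ (Z \ Y)) ∪ p • ((Y \ Z) ∪ (Z \ Y)) := by
  rintro x (⟨hxZ, hxpZ⟩ | ⟨hxpZ, hxZ⟩)
  · by_cases hxY : x ∈ Y
    · right
      rw [← hpY] at hxY
      obtain ⟨w, hw, hwx⟩ := Set.mem_smul_set.mp hxY
      refine Set.mem_smul_set.mpr ⟨w, Or.inl ⟨hw, ?_⟩, hwx⟩
      intro hc
      exact hxpZ (Set.mem_smul_set.mpr ⟨w, hc, hwx⟩)
    · exact Or.inl (Or.inr ⟨hxZ, hxY⟩)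
  · by_cases hxY : x ∈ Y
    · exact Or.inl (Or.inl ⟨hxY, hxZ⟩)
    · right
      obtain ⟨w, hw, hwx⟩ := Set.mem_smul_set.mp hxpZ
      refine Set.mem_smul_set.mpr ⟨w, Or.inr ⟨hw, ?_⟩, hwx⟩
      intro hc
      apply hxY
      rw [← hpY]
      exact Set.mem_smul_set.mpr ⟨w, hc, hwx⟩

private lemma stab_subset_mul {H : Subgroup G} {A : Set G} {a b : G}
    (ha : a ∈ A) (hb : b ∉ A) {F : Finset G}
    (hF : (A \ (· * (b⁻¹ * a)) '' A) ∪ ((· * (b⁻¹ * a)) '' A \ A) ⊆ (H : Set G) * (F : Set G)) :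
    ((MulAction.stabilizer G A : Subgroup G) : Set G) ⊆
      (H : Set G) * ((F * {a⁻¹} : Finset G) : Set G) := by
  intro p hp
  have hp' : p ∈ MulAction.stabilizer G A := hp
  have hpA : p • A = A := MulAction.mem_stabilizer_iff.mp hp'
  have h1 : p * a ∈ A := by
    have := Set.smul_mem_smul_set (a := p) ha
    rwa [hpA, smul_eq_mul] at this
  have h2 : p * b ∉ A := by
    intro hc
    have hpinv : p⁻¹ • A = A := MulAction.mem_stabilizer_iff.mp (inv_mem hp')
    apply hb
    have := Set.smul_mem_smul_set (a := p⁻¹) hc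
    rwa [hpinv, smul_eq_mul, inv_mul_cancel_left] at this
  have h3 : p * a ∈ A \ (· * (b⁻¹ * a)) '' A := by
    refine ⟨h1, ?_⟩
    rintro ⟨w, hw, he⟩
    apply h2
    have hwp : w = p * b := by
      have h4 : w = (p * a) * (b⁻¹ * a)⁻¹ := eq_mul_inv_of_mul_eq he
      rw [h4]
      group
    exact hwp ▸ hw
  obtain ⟨q, hq, ff, hff, he⟩ := Set.mem_mul.mp (hF (Or.inl h3))
  refine Set.mem_mul.mpr ⟨q, hq, ff * a⁻¹, ?_, ?_⟩
  · rw [Finset.coe_mul, Finset.coe_singleton]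
    exact Set.mul_mem_mul hff rfl
  · calc q * (ff * a⁻¹) = (q * ff) * a⁻¹ := (mul_assoc _ _ _).symm
    _ = (p * a) * a⁻¹ := by rw [he]
    _ = p := by group

private lemma stab_engine (K : Subgroup G) (Z : Set G) (hgp : GoodPos1 K Z)
    (hnt1 : ¬ HFin K Z) (hnt2 : ¬ HFin K Zᶜ) (g : G)
    (hsm : HFin K ((Z \ g • Z) ∪ (g • Z \ Z)))
    (hsm' : HFin K ((Z \ g⁻¹ • Z) ∪ (g⁻¹ • Z \ Z)))
    (hpow : ∃ m : ℕ, 1 ≤ m ∧ g ^ m • Z = Z) : g • Z = Z := by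
  classical
  set U : Set G := g • Z with hUdef
  have hUE : U ∈ ESet (fun _ : Unit => Z) := ⟨(), g, Or.inl rfl⟩
  have hZE : Z ∈ ESet (fun _ : Unit => Z) := ⟨(), 1, Or.inl (one_smul G Z).symm⟩
  have hc1 : g⁻¹ • (U ∩ Zᶜ) ⊆ (Z \ g⁻¹ • Z) ∪ (g⁻¹ • Z \ Z) := by
    intro x hx
    obtain ⟨w, hw, hwx⟩ := Set.mem_smul_set.mp hx
    obtain ⟨hw1, hw2⟩ := hw
    obtain ⟨z, hz, hzw⟩ := Set.mem_smul_set.mp hw1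
    have hxz : x = z := by rw [← hwx, ← hzw, inv_smul_smul]
    subst hxz
    refine Or.inl ⟨hz, ?_⟩
    intro hmem
    obtain ⟨u, hu, he⟩ := Set.mem_smul_set.mp hmem
    have huz : u = g • x := by rw [← he, smul_inv_smul]
    apply hw2
    rw [← hzw, ← huz]
    exact hu
  have hc2 : g⁻¹ • (Uᶜ ∩ Z) ⊆ (Z \ g⁻¹ • Z) ∪ (g⁻¹ • Z \ Z) := by
    intro x hx
    obtain ⟨w, hw, hwx⟩ := Set.mem_smul_set.mp hx
    obtain ⟨hw1, hw2⟩ := hw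
    refine Or.inr ⟨Set.mem_smul_set.mpr ⟨w, hw2, hwx⟩, ?_⟩
    intro hxZ
    apply hw1
    refine Set.mem_smul_set.mpr ⟨x, hxZ, ?_⟩
    rw [← hwx, smul_inv_smul]
  have small1 : SmallFor (fun _ : Unit => K) (fun _ : Unit => Z) U (U ∩ Zᶜ) :=
    ⟨(), g, Or.inl rfl, hfin_mono hc1 hsm'⟩
  have small2 : SmallFor (fun _ : Unit => K) (fun _ : Unit => Z) U (Uᶜ ∩ Z) :=
    ⟨(), g, Or.inl rfl, hfin_mono hc2 hsm'⟩
  have hdisj := hgp U hUE Z hZE 1 2 (by decide) small1 small2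
  rcases hdisj with h | h | h | h
  · exfalso
    apply hnt1
    refine hfin_mono ?_ hsm
    intro x hx
    refine Or.inl ⟨hx, fun hu => ?_⟩
    exact Set.notMem_empty x (h ▸ Set.mem_inter hu hx)
  · have hsub : U ⊆ Z := by
      intro x hxU
      by_contra hxZ
      exact Set.notMem_empty x (h ▸ Set.mem_inter hxU hxZ)
    obtain ⟨m, hm, hfix⟩ := hpow
    exact smul_eq_of_nested hsub m hm hfix
  · have hZU : Z ⊆ U := by
      intro x hx
      by_contra hxU
      exact Set.notMem_empty x (h ▸ Set.mem_inter hxU hx)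
    have hsub' : g⁻¹ • Z ⊆ Z := by
      have h5 := Set.smul_set_mono (a := g⁻¹) hZU
      rwa [hUdef, inv_smul_smul] at h5
    obtain ⟨m, hm, hfix⟩ := hpow
    have hfix' : g⁻¹ ^ m • Z = Z := by
      rw [inv_pow]
      calc (g ^ m)⁻¹ • Z = (g ^ m)⁻¹ • (g ^ m • Z) := by rw [hfix]
      _ = Z := inv_smul_smul _ _
    have h6 := smul_eq_of_nested hsub' m hm hfix'
    calc g • Z = g • (g⁻¹ • Z) := by rw [h6]
    _ = Z := smul_inv_smul _ _
  · exfalso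
    apply hnt2
    refine hfin_mono ?_ hsm
    intro x hx
    refine Or.inr ⟨?_, hx⟩
    by_contra hxU
    exact Set.notMem_empty x (h ▸ Set.mem_inter hxU hx)

end AuxiliaryLemmas
/-- Equivalent almost invariant sets which are each in good position have equal
stabilisers. -/
theorem equivalent_good_position_implies_same_stabiliser
    {G : Type*} [Group G] (hG : Group.FG G) (H K : Subgroup G) (Y Z : Set G)
    (hY : NontrivAI H Y) (hZ : NontrivAI K Z)
    (hequiv : AIEquiv H Y Z)
    (hgpY : GoodPos1 H Y) (hgpZ : GoodPos1 K Z) :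
    {g : G | g • Y = Y} = {g : G | g • Z = Z} := by
  classical
  obtain ⟨⟨hYinv, hYai⟩, hYnf, hYcnf⟩ := hY
  obtain ⟨⟨hZinv, hZai⟩, hZnf, hZcnf⟩ := hZ
  obtain ⟨F₀, hD⟩ := hequiv
  set D : Set G := (Y \ Z) ∪ (Z \ Y) with hDdef
  -- nonempty witnesses
  obtain ⟨y₀, hy₀⟩ := nonempty_of_not_hfin hYnf
  obtain ⟨y₁, hy₁⟩ := nonempty_of_not_hfin hYcnf
  obtain ⟨z₀, hz₀⟩ := nonempty_of_not_hfin hZnf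
  obtain ⟨z₁, hz₁⟩ := nonempty_of_not_hfin hZcnf
  -- the two stabilizers
  set J : Subgroup G := MulAction.stabilizer G Y with hJdef
  set L : Subgroup G := MulAction.stabilizer G Z with hLdef
  have hHJ : (H : Set G) ⊆ (J : Set G) := by
    intro h hh
    exact MulAction.mem_stabilizer_iff.mpr (hYinv h hh)
  have hKL : (K : Set G) ⊆ (L : Set G) := by
    intro k hk
    exact MulAction.mem_stabilizer_iff.mpr (hZinv k hk)
  -- Z and its complement are not H-finite
  have hHZ : ¬ HFin H Z := by
    intro hfin
    apply hYnf
    have hsub : Y ⊆ Z ∪ D := by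
      intro x hx
      by_cases hxZ : x ∈ Z
      · exact Or.inl hxZ
      · exact Or.inr (Or.inl ⟨hx, hxZ⟩)
    exact hfin_mono hsub (hfin_union hfin ⟨F₀, hD⟩)
  have hHZc : ¬ HFin H Zᶜ := by
    intro hfin
    apply hYcnf
    have hsub : Yᶜ ⊆ Zᶜ ∪ D := by
      intro x hx
      by_cases hxZ : x ∈ Z
      · exact Or.inr (Or.inr ⟨hxZ, hx⟩)
      · exact Or.inl hxZ
    exact hfin_mono hsub (hfin_union hfin ⟨F₀, hD⟩)
  -- Z is weakly H-almost invariant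
  have hZH : ∀ a : G, HFin H ((Z \ (· * a) '' Z) ∪ ((· * a) '' Z \ Z)) := by
    intro a
    have hYa := hYai a
    have hDa := hfin_image_mul_right a (⟨F₀, hD⟩ : HFin H D)
    refine hfin_mono ?_ (hfin_union (hfin_union (⟨F₀, hD⟩ : HFin H D) hYa) hDa)
    rintro x (⟨hxZ, hxZa⟩ | ⟨hxZa, hxZ⟩)
    · by_cases hxY : x ∈ Y
      · by_cases hxYa : x ∈ (· * a) '' Y
        · obtain ⟨w, hw, rfl⟩ := hxYa
          have hwZ : w ∉ Z := fun hc => hxZa ⟨w, hc, rfl⟩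
          exact Or.inr ⟨w, Or.inl ⟨hw, hwZ⟩, rfl⟩
        · exact Or.inl (Or.inr (Or.inl ⟨hxY, hxYa⟩))
      · exact Or.inl (Or.inl (Or.inr ⟨hxZ, hxY⟩))
    · by_cases hxY : x ∈ Y
      · exact Or.inl (Or.inl (Or.inl ⟨hxY, hxZ⟩))
      · obtain ⟨w, hw, rfl⟩ := hxZa
        by_cases hwY : w ∈ Y
        · exact Or.inl (Or.inr (Or.inr ⟨⟨w, hwY, rfl⟩, hxY⟩))
        · exact Or.inr ⟨w, Or.inr ⟨hw, hwY⟩, rfl⟩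
  -- J is H-finite
  obtain ⟨FJ, hJH⟩ : ∃ FJ : Finset G, (J : Set G) ⊆ (H : Set G) * (FJ : Set G) := by
    obtain ⟨Fc, hFc⟩ := hYai (y₁⁻¹ * y₀)
    exact ⟨Fc * {y₀⁻¹}, stab_subset_mul hy₀ hy₁ hFc⟩
  -- L is H-finite
  obtain ⟨FL, hLH⟩ : ∃ FL : Finset G, (L : Set G) ⊆ (H : Set G) * (FL : Set G) := by
    obtain ⟨Fc, hFc⟩ := hZH (z₁⁻¹ * z₀)
    exact ⟨Fc * {z₀⁻¹}, stab_subset_mul hz₀ hz₁ hFc⟩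
  -- D is contained in J * F₀
  have hDJ : D ⊆ (J : Set G) * (F₀ : Set G) := by
    intro x hx
    obtain ⟨h, hh, f, hf, rfl⟩ := Set.mem_mul.mp (hD hx)
    exact Set.mul_mem_mul (hHJ hh) hf
  -- translating J * F₀ by an element of J
  have hJV : ∀ q : G, q ∈ J → ∀ x : G,
      q * x ∈ (J : Set G) * (F₀ : Set G) → x ∈ (J : Set G) * (F₀ : Set G) := by
    intro q hq x hx
    obtain ⟨j, hj, f, hf, he⟩ := Set.mem_mul.mp hx
    refine Set.mem_mul.mpr ⟨q⁻¹ * j, mul_mem (inv_mem hq) hj, f, hf, ?_⟩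
    rw [mul_assoc, he, inv_mul_cancel_left]
  -- J is K-finite (the key commensurability step)
  obtain ⟨FJK, hJK⟩ : ∃ FJK : Finset G, (J : Set G) ⊆ (K : Set G) * (FJK : Set G) := by
    have hbig : HFin H ((J : Set G) * (F₀ : Set G)) :=
      ⟨FJ * F₀, subset_mul_trans (Set.Subset.refl _) hJH⟩
    have hzex : ∃ z, z ∈ Z ∧ z ∉ (J : Set G) * (F₀ : Set G) := by
      by_contra hc
      push_neg at hc
      exact hHZ (hfin_mono (fun x hx => hc x hx) hbig)
    have hzex' : ∃ z', z' ∈ Zᶜ ∧ z' ∉ (J : Set G) * (F₀ : Set G) := by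
      by_contra hc
      push_neg at hc
      exact hHZc (hfin_mono (fun x hx => hc x hx) hbig)
    obtain ⟨z, hzZ, hzV⟩ := hzex
    obtain ⟨z', hz'Z, hz'V⟩ := hzex'
    obtain ⟨Fe, hFe⟩ := hZai (z'⁻¹ * z)
    refine ⟨Fe * {z⁻¹}, ?_⟩
    intro p hp
    have hpJ : p ∈ J := hp
    have hpY : p • Y = Y := MulAction.mem_stabilizer_iff.mp hpJ
    have hpz : p * z ∈ Z := by
      by_contra hc
      have h7 : p * z ∈ (Z \ p • Z) ∪ (p • Z \ Z) := Or.inr ⟨⟨z, hzZ, rfl⟩, hc⟩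
      rcases sdiff_smul_subset hpY h7 with h8 | h8
      · exact hzV (hJV p hpJ z (hDJ h8))
      · obtain ⟨w, hw, he⟩ := h8
        have hwz : w = z := by
          have h9 := congrArg (fun t => p⁻¹ • t) he
          simpa [smul_smul, smul_eq_mul, inv_mul_cancel_left] using h9
        exact hzV (hDJ (hwz ▸ hw))
    have hpz' : p * z' ∉ Z := by
      intro hc
      have hnotin : p * z' ∉ p • Z := by
        rintro ⟨w, hw, he⟩
        have hwz : w = z' := by
          have h9 := congrArg (fun t => p⁻¹ • t) he
          simpa [smul_smul, smul_eq_mul, inv_mul_cancel_left] using h9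
        exact hz'Z (hwz ▸ hw)
      have h7 : p * z' ∈ (Z \ p • Z) ∪ (p • Z \ Z) := Or.inl ⟨hc, hnotin⟩
      rcases sdiff_smul_subset hpY h7 with h8 | h8
      · exact hz'V (hJV p hpJ z' (hDJ h8))
      · obtain ⟨w, hw, he⟩ := h8
        have hwz : w = z' := by
          have h9 := congrArg (fun t => p⁻¹ • t) he
          simpa [smul_smul, smul_eq_mul, inv_mul_cancel_left] using h9
        exact hz'V (hDJ (hwz ▸ hw))
    have h3 : p * z ∈ Z \ (· * (z'⁻¹ * z)) '' Z := by
      refine ⟨hpz, ?_⟩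
      rintro ⟨w, hw, he⟩
      apply hpz'
      have hwp : w = p * z' := by
        have h4 : w = (p * z) * (z'⁻¹ * z)⁻¹ := eq_mul_inv_of_mul_eq he
        rw [h4]
        group
      exact hwp ▸ hw
    obtain ⟨q, hq, f, hf, he⟩ := Set.mem_mul.mp (hFe (Or.inl h3))
    refine Set.mem_mul.mpr ⟨q, hq, f * z⁻¹, ?_, ?_⟩
    · rw [Finset.coe_mul, Finset.coe_singleton]
      exact Set.mul_mem_mul hf rfl
    · calc q * (f * z⁻¹) = (q * f) * z⁻¹ := (mul_assoc _ _ _).symm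
      _ = (p * z) * z⁻¹ := by rw [he]
      _ = p := by group
  -- D is K-finite
  have hDK : D ⊆ (K : Set G) * ((FJK * F₀ : Finset G) : Set G) := subset_mul_trans hDJ hJK
  -- smallness over K of the symmetric differences Z △ pZ for p ∈ J
  have hsmallKZ : ∀ p : G, p ∈ J → HFin K ((Z \ p • Z) ∪ (p • Z \ Z)) := by
    intro p hp
    have hpY : p • Y = Y := MulAction.mem_stabilizer_iff.mp hp
    have hpD : p • D ⊆ (K : Set G) * ((FJK * F₀ : Finset G) : Set G) := by
      have h1 : p • D ⊆ (p • (J : Set G)) * (F₀ : Set G) := smul_subset_mul p hDJ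
      have h2 : p • (J : Set G) ⊆ (J : Set G) := by
        rintro x ⟨q, hq, rfl⟩
        exact mul_mem hp hq
      exact subset_mul_trans (h1.trans (mul_sub_left h2)) hJK
    exact hfin_mono (sdiff_smul_subset hpY) (hfin_union ⟨_, hDK⟩ ⟨_, hpD⟩)
  have dir1 : ∀ g : G, g • Y = Y → g • Z = Z := by
    intro g hg
    have hgJ : g ∈ J := MulAction.mem_stabilizer_iff.mpr hg
    have hpow : ∃ m : ℕ, 1 ≤ m ∧ g ^ m • Z = Z := by
      obtain ⟨m, hm, hmem⟩ := exists_pow_mem (fun n => hJK (pow_mem hgJ n))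
      exact ⟨m, hm, hZinv _ hmem⟩
    exact stab_engine K Z hgpZ hZnf hZcnf g (hsmallKZ g hgJ) (hsmallKZ g⁻¹ (inv_mem hgJ)) hpow
  -- the reverse direction
  have hD' : ((Z \ Y) ∪ (Y \ Z)) ⊆ D := fun x hx => hx.elim Or.inr Or.inl
  have hsmallHY : ∀ p : G, p ∈ L → HFin H ((Y \ p • Y) ∪ (p • Y \ Y)) := by
    intro p hp
    have hpZ : p • Z = Z := MulAction.mem_stabilizer_iff.mp hp
    have hsub := sdiff_smul_subset (Y := Z) (Z := Y) hpZ
    have hpD' : p • ((Z \ Y) ∪ (Y \ Z)) ⊆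
        (H : Set G) * ((FL * (FJK * F₀) : Finset G) : Set G) := by
      have h1 : p • ((Z \ Y) ∪ (Y \ Z)) ⊆
          (p • (K : Set G)) * ((FJK * F₀ : Finset G) : Set G) :=
        smul_subset_mul p (hD'.trans hDK)
      have h2 : p • (K : Set G) ⊆ (L : Set G) := by
        rintro x ⟨q, hq, rfl⟩
        exact mul_mem hp (hKL hq)
      exact subset_mul_trans (h1.trans (mul_sub_left h2)) hLH
    exact hfin_mono hsub (hfin_union ⟨F₀, hD'.trans hD⟩ ⟨_, hpD'⟩)
  have dir2 : ∀ g : G, g • Z = Z → g • Y = Y := by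
    intro g hg
    have hgL : g ∈ L := MulAction.mem_stabilizer_iff.mpr hg
    have hpow : ∃ m : ℕ, 1 ≤ m ∧ g ^ m • Y = Y := by
      obtain ⟨m, hm, hmem⟩ := exists_pow_mem (K := H) (fun n => hLH (pow_mem hgL n))
      exact ⟨m, hm, hYinv _ hmem⟩
    exact stab_engine H Y hgpY hYnf hYcnf g (hsmallHY g hgL) (hsmallHY g⁻¹ (inv_mem hgL)) hpow
  ext x
  simp only [Set.mem_setOf_eq]
  exact ⟨dir1 x, dir2 x⟩
end
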